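/- arXiv:0910.4089 — 4 statements merged into one kernel-verified Lean document; each statement's English description precedes it below -/
import Mathlib

section
/- Let S be a finite set with |S| = κ ≥ 2 and α > 1. Define, for a configuration η : S → ℕ, a(η) = Π_{x∈S} a(η_x) where a(0)=1, a(n)=n^α. Then there exists a constant A_κ > 0 depending only on α and κ such that for all N ≥ 1, 1 ≤ N^α Σ_{η : Σ_x η_x = N} 1/a(η) ≤ A_κ. -/
noncomputable def aZR (α : ℝ) (n : ℕ) : ℝ := if n = 0 then 1 else (n : ℝ) ^ α

def confs (S : Type*) [Fintype S] [DecidableEq S] (N : ℕ) : Finset (S → ℕ) :=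
  (Fintype.piFinset fun _ => Finset.range (N + 1)).filter (fun η => ∑ x, η x = N)

lemma aZR_nonneg (α : ℝ) (n : ℕ) : 0 ≤ aZR α n := by
  unfold aZR; split
  · norm_num
  · positivity

lemma one_div_aZR_nonneg (α : ℝ) (n : ℕ) : 0 ≤ 1 / aZR α n :=
  div_nonneg one_pos.le (aZR_nonneg α n)

noncomputable def Gfun {S : Type*} [DecidableEq S] (α : ℝ) (y : S) (x : S) (m : ℕ) : ℝ :=
  if x = y then (if m = 0 then 1 else 0) else 1 / aZR α m

lemma sum_one_div_aZR_le (α : ℝ) (hα : 1 < α) (N : ℕ) :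
    ∑ m ∈ Finset.range (N + 1), 1 / aZR α m ≤ 1 + ∑' n : ℕ, 1 / (n : ℝ) ^ α := by
  have hα0 : α ≠ 0 := by linarith
  have hsummable : Summable (fun n : ℕ => 1 / (n : ℝ) ^ α) :=
    Real.summable_one_div_nat_rpow.mpr hα
  have key : ∑ m ∈ Finset.range (N + 1), 1 / aZR α m
      = (∑ m ∈ Finset.range N, 1 / ((m + 1 : ℕ) : ℝ) ^ α) + 1 := by
    rw [Finset.sum_range_succ']
    simp [aZR]
  rw [key]
  have h2 : ∑ m ∈ Finset.range N, 1 / ((m + 1 : ℕ) : ℝ) ^ α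
      ≤ ∑' n : ℕ, 1 / (n : ℝ) ^ α := by
    have h3 : ∑ m ∈ Finset.range N, 1 / ((m + 1 : ℕ) : ℝ) ^ α
        = ∑ m ∈ Finset.range (N + 1), 1 / ((m : ℕ) : ℝ) ^ α := by
      rw [Finset.sum_range_succ']
      simp [Real.zero_rpow hα0]
    rw [h3]
    exact Summable.sum_le_tsum _ (fun i _ => by positivity) hsummable
  linarith

set_option maxHeartbeats 1000000 in
theorem partition_function_bounded (S : Type*) [Fintype S] [DecidableEq S]
    (hκ : 2 ≤ Fintype.card S) (α : ℝ) (hα : 1 < α) :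
    ∃ A : ℝ, 0 < A ∧ ∀ N : ℕ, 1 ≤ N →
      1 ≤ (N : ℝ) ^ α * ∑ η ∈ confs S N, ∏ x, 1 / aZR α (η x) ∧
      (N : ℝ) ^ α * ∑ η ∈ confs S N, ∏ x, 1 / aZR α (η x) ≤ A := by
  classical
  set c := Fintype.card S with hc
  have hc0 : 0 < c := by omega
  have hcR : (0 : ℝ) < (c : ℝ) := by exact_mod_cast hc0
  set T := ∑' n : ℕ, 1 / (n : ℝ) ^ α with hTdef
  have hT0 : 0 ≤ T := tsum_nonneg (fun n => by positivity)
  have h1T : (0 : ℝ) < 1 + T := by linarith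
  refine ⟨(c : ℝ) * (c : ℝ) ^ α * (1 + T) ^ c, by positivity, ?_⟩
  intro N hN
  have hNR : (0 : ℝ) < (N : ℝ) := by exact_mod_cast hN
  have hNα : (0 : ℝ) < (N : ℝ) ^ α := Real.rpow_pos_of_pos hNR α
  obtain ⟨x0⟩ : Nonempty S := Fintype.card_pos_iff.mp (by omega)
  have prodnn : ∀ η : S → ℕ, 0 ≤ ∏ x, 1 / aZR α (η x) :=
    fun η => Finset.prod_nonneg fun x _ => one_div_aZR_nonneg α (η x)
  constructor
  · -- lower bound
    set η0 : S → ℕ := fun x => if x = x0 then N else 0 with hη0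
    have hmem : η0 ∈ confs S N := by
      simp only [confs, Finset.mem_filter, Fintype.mem_piFinset, Finset.mem_range]
      constructor
      · intro x
        by_cases h : x = x0 <;> simp [hη0, h] <;> omega
      · simp [hη0]
    have hprod : ∏ x, 1 / aZR α (η0 x) = 1 / (N : ℝ) ^ α := by
      rw [Finset.prod_eq_single x0]
      · simp only [hη0, if_pos rfl, aZR]
        rw [if_neg (by omega)]
      · intro b _ hb
        simp [hη0, hb, aZR]
      · simp
    have hsum : 1 / (N : ℝ) ^ α ≤ ∑ η ∈ confs S N, ∏ x, 1 / aZR α (η x) := by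
      rw [← hprod]
      exact Finset.single_le_sum (fun η _ => prodnn η) hmem
    calc (1 : ℝ) = (N : ℝ) ^ α * (1 / (N : ℝ) ^ α) := by field_simp
      _ ≤ (N : ℝ) ^ α * ∑ η ∈ confs S N, ∏ x, 1 / aZR α (η x) := by
          exact mul_le_mul_of_nonneg_left hsum hNα.le
  · -- upper bound
    -- Step 1: pigeonhole
    have pigeon : ∀ η ∈ confs S N, ∃ y : S, N ≤ c * η y := by
      intro η hη
      by_contra hcon
      push_neg at hcon
      have hsumη : ∑ x, η x = N := (Finset.mem_filter.mp hη).2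
      have : ∑ x : S, c * η x ≤ ∑ x : S, (N - 1) :=
        Finset.sum_le_sum fun x _ => by have := hcon x; omega
      rw [← Finset.mul_sum, hsumη, Finset.sum_const, Finset.card_univ, ← hc,
        smul_eq_mul] at this
      have h2 : c * (N - 1) < c * N :=
        Nat.mul_lt_mul_of_pos_left (by omega) hc0
      omega
    have step1 : ∑ η ∈ confs S N, ∏ x, 1 / aZR α (η x)
        ≤ ∑ y : S, ∑ η ∈ (confs S N).filter (fun η => N ≤ c * η y),
            ∏ x, 1 / aZR α (η x) := by
      have : ∀ y : S, ∑ η ∈ (confs S N).filter (fun η => N ≤ c * η y),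
            ∏ x, 1 / aZR α (η x)
          = ∑ η ∈ confs S N, if N ≤ c * η y then ∏ x, 1 / aZR α (η x) else 0 :=
        fun y => Finset.sum_filter _ _
      simp_rw [this]
      rw [Finset.sum_comm]
      refine Finset.sum_le_sum fun η hη => ?_
      obtain ⟨y, hy⟩ := pigeon η hη
      calc ∏ x, 1 / aZR α (η x)
          = if N ≤ c * η y then ∏ x, 1 / aZR α (η x) else 0 := by rw [if_pos hy]
        _ ≤ ∑ y' : S, if N ≤ c * η y' then ∏ x, 1 / aZR α (η x) else 0 :=
            Finset.single_le_sum
              (f := fun y' => if N ≤ c * η y' then ∏ x, 1 / aZR α (η x) else 0)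
              (fun y' _ => by split; exacts [prodnn η, le_rfl])
              (Finset.mem_univ y)
    -- Step 2: bound the filtered sum for each fixed site y
    have step2 : ∀ y : S,
        ∑ η ∈ (confs S N).filter (fun η => N ≤ c * η y), ∏ x, 1 / aZR α (η x)
          ≤ (c : ℝ) ^ α / (N : ℝ) ^ α * (1 + T) ^ c := by
      intro y
      obtain ⟨G, hG⟩ : ∃ G : S → ℕ → ℝ, G = Gfun α y := ⟨_, rfl⟩
      have hGnn : ∀ x m, 0 ≤ G x m := by
        intro x m
        simp only [hG, Gfun]
        split
        · split <;> norm_num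
        · exact one_div_aZR_nonneg α m
      set F := (confs S N).filter (fun η => N ≤ c * η y) with hF
      have hstep : ∀ η ∈ F, ∏ x, 1 / aZR α (η x)
          ≤ (c : ℝ) ^ α / (N : ℝ) ^ α * ∏ x, G x (Function.update η y 0 x) := by
        intro η hη
        obtain ⟨hconf, hy⟩ := Finset.mem_filter.mp hη
        have hηy : η y ≠ 0 := by intro h; rw [h] at hy; omega
        have hPG : ∏ x, G x (Function.update η y 0 x)
            = ∏ x ∈ Finset.univ.erase y, 1 / aZR α (η x) := by
          rw [← Finset.mul_prod_erase Finset.univ _ (Finset.mem_univ y)]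
          have h1 : G y (Function.update η y 0 y) = 1 := by
            simp [hG, Gfun, Function.update_self]
          rw [h1, one_mul]
          refine Finset.prod_congr rfl fun x hx => ?_
          have hxy : x ≠ y := (Finset.mem_erase.mp hx).1
          simp [hG, Gfun, hxy, Function.update_of_ne hxy]
        have hsplit : ∏ x, 1 / aZR α (η x)
            = (1 / aZR α (η y)) * ∏ x ∈ Finset.univ.erase y, 1 / aZR α (η x) :=
          (Finset.mul_prod_erase Finset.univ _ (Finset.mem_univ y)).symm
        have hkey : 1 / aZR α (η y) ≤ (c : ℝ) ^ α / (N : ℝ) ^ α := by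
          have haz : aZR α (η y) = ((η y : ℕ) : ℝ) ^ α := by
            simp [aZR, hηy]
          have hηy1 : (0 : ℝ) < (η y : ℝ) := by
            have : 0 < η y := Nat.pos_of_ne_zero hηy
            exact_mod_cast this
          have hηyα : (0 : ℝ) < ((η y : ℕ) : ℝ) ^ α := Real.rpow_pos_of_pos hηy1 α
          rw [haz, div_le_div_iff₀ hηyα hNα]
          have h2 : (N : ℝ) ≤ (c : ℝ) * (η y : ℝ) := by exact_mod_cast hy
          calc (1 : ℝ) * (N : ℝ) ^ α = (N : ℝ) ^ α := one_mul _
            _ ≤ ((c : ℝ) * (η y : ℝ)) ^ α := Real.rpow_le_rpow hNR.le h2 (by linarith)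
            _ = (c : ℝ) ^ α * ((η y : ℕ) : ℝ) ^ α := Real.mul_rpow hcR.le hηy1.le
        rw [hsplit, hPG]
        exact mul_le_mul_of_nonneg_right hkey
          (Finset.prod_nonneg fun x _ => one_div_aZR_nonneg α (η x))
      have hinj : ∀ η ∈ F, ∀ η' ∈ F,
          Function.update η y 0 = Function.update η' y 0 → η = η' := by
        intro η hη η' hη' heq
        have hconf : ∑ x, η x = N :=
          (Finset.mem_filter.mp ((Finset.mem_filter.mp hη).1)).2
        have hconf' : ∑ x, η' x = N :=
          (Finset.mem_filter.mp ((Finset.mem_filter.mp hη').1)).2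
        have hoff : ∀ x, x ≠ y → η x = η' x := by
          intro x hx
          have := congrFun heq x
          rwa [Function.update_of_ne hx, Function.update_of_ne hx] at this
        have hsume : ∑ x ∈ Finset.univ.erase y, η x = ∑ x ∈ Finset.univ.erase y, η' x :=
          Finset.sum_congr rfl fun x hx => hoff x (Finset.mem_erase.mp hx).1
        have e1 : η y + ∑ x ∈ Finset.univ.erase y, η x = N := by
          rw [Finset.add_sum_erase Finset.univ _ (Finset.mem_univ y)]; exact hconf
        have e2 : η' y + ∑ x ∈ Finset.univ.erase y, η' x = N := by
          rw [Finset.add_sum_erase Finset.univ _ (Finset.mem_univ y)]; exact hconf'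
        funext x
        by_cases hx : x = y
        · subst hx; omega
        · exact hoff x hx
      calc ∑ η ∈ F, ∏ x, 1 / aZR α (η x)
          ≤ ∑ η ∈ F, (c : ℝ) ^ α / (N : ℝ) ^ α * ∏ x, G x (Function.update η y 0 x) :=
            Finset.sum_le_sum hstep
        _ = (c : ℝ) ^ α / (N : ℝ) ^ α *
            ∑ η ∈ F, ∏ x, G x (Function.update η y 0 x) := by rw [← Finset.mul_sum]
        _ ≤ (c : ℝ) ^ α / (N : ℝ) ^ α * (1 + T) ^ c := ?_
      refine mul_le_mul_of_nonneg_left ?_ (by positivity)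
      have himg : ∑ η ∈ F, ∏ x, G x (Function.update η y 0 x)
          = ∑ θ ∈ F.image (fun η => Function.update η y 0), ∏ x, G x (θ x) :=
        (Finset.sum_image (f := fun θ => ∏ x, G x (θ x)) hinj).symm
      rw [himg]
      have hsub : F.image (fun η => Function.update η y 0)
          ⊆ Fintype.piFinset (fun _ : S => Finset.range (N + 1)) := by
        intro θ hθ
        obtain ⟨η, hη, rfl⟩ := Finset.mem_image.mp hθ
        have hconf := (Finset.mem_filter.mp ((Finset.mem_filter.mp hη).1)).1
        rw [Fintype.mem_piFinset] at hconf ⊢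
        intro x
        by_cases hx : x = y
        · subst hx; simp [Finset.mem_range]
        · rw [Function.update_of_ne hx]; exact hconf x
      calc ∑ θ ∈ F.image (fun η => Function.update η y 0), ∏ x, G x (θ x)
          ≤ ∑ θ ∈ Fintype.piFinset (fun _ : S => Finset.range (N + 1)),
              ∏ x, G x (θ x) :=
            Finset.sum_le_sum_of_subset_of_nonneg hsub
              (fun θ _ _ => Finset.prod_nonneg fun x _ => hGnn x (θ x))
        _ = ∏ x : S, ∑ m ∈ Finset.range (N + 1), G x m := (Finset.prod_univ_sum _ _).symm
        _ ≤ ∏ _x : S, (1 + T) := by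
            refine Finset.prod_le_prod (fun x _ => Finset.sum_nonneg fun m _ => hGnn x m)
              (fun x _ => ?_)
            by_cases hx : x = y
            · have : ∑ m ∈ Finset.range (N + 1), G x m = 1 := by
                simp [hG, Gfun, hx]
              rw [this]; linarith
            · have : ∑ m ∈ Finset.range (N + 1), G x m
                  = ∑ m ∈ Finset.range (N + 1), 1 / aZR α m := by
                refine Finset.sum_congr rfl fun m _ => ?_
                simp [hG, Gfun, hx]
              rw [this]
              exact sum_one_div_aZR_le α hα N
        _ = (1 + T) ^ c := by rw [Finset.prod_const, Finset.card_univ, ← hc]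
    -- combine
    have total : ∑ η ∈ confs S N, ∏ x, 1 / aZR α (η x)
        ≤ (c : ℝ) * ((c : ℝ) ^ α / (N : ℝ) ^ α * (1 + T) ^ c) := by
      calc ∑ η ∈ confs S N, ∏ x, 1 / aZR α (η x)
          ≤ ∑ y : S, ∑ η ∈ (confs S N).filter (fun η => N ≤ c * η y),
              ∏ x, 1 / aZR α (η x) := step1
        _ ≤ ∑ _y : S, (c : ℝ) ^ α / (N : ℝ) ^ α * (1 + T) ^ c :=
            Finset.sum_le_sum fun y _ => step2 y
        _ = (c : ℝ) * ((c : ℝ) ^ α / (N : ℝ) ^ α * (1 + T) ^ c) := by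
            rw [Finset.sum_const, Finset.card_univ, ← hc, nsmul_eq_mul]
    calc (N : ℝ) ^ α * ∑ η ∈ confs S N, ∏ x, 1 / aZR α (η x)
        ≤ (N : ℝ) ^ α * ((c : ℝ) * ((c : ℝ) ^ α / (N : ℝ) ^ α * (1 + T) ^ c)) :=
          mul_le_mul_of_nonneg_left total hNα.le
      _ = (c : ℝ) * (c : ℝ) ^ α * (1 + T) ^ c := by
          field_simp
end

section
/- Let S be a finite set with |S| = κ ≥ 2 and α > 1. There exists a constant C_κ > 0 depending only on α and κ such that for every integer ℓ > 0 and every N > ℓ, N^α Σ_{η ∈ E_N : max_x η_x ≤ N - ℓ} 1/a(η) ≤ C_κ / ℓ^{α-1}. -/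
open Finset

lemma aZR_pos (α : ℝ) (n : ℕ) : 0 < aZR α n := by
  unfold aZR
  split
  · norm_num
  · exact Real.rpow_pos_of_pos (by positivity) _

lemma aZR_of_pos (α : ℝ) {n : ℕ} (hn : 1 ≤ n) : aZR α n = (n : ℝ) ^ α := by
  unfold aZR; rw [if_neg (by omega)]

lemma one_div_aZR (α : ℝ) {n : ℕ} (hn : 1 ≤ n) : 1 / aZR α n = (n : ℝ) ^ (-α) := by
  rw [aZR_of_pos α hn, Real.rpow_neg (by positivity), one_div]

lemma summable_one_div_aZR {α : ℝ} (hα : 1 < α) : Summable (fun n : ℕ => 1 / aZR α n) := by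
  rw [← summable_nat_add_iff 1]
  have h : Summable (fun n : ℕ => 1 / (n : ℝ) ^ α) :=
    Real.summable_one_div_nat_rpow.2 hα
  have h2 := (summable_nat_add_iff 1).2 h
  refine h2.congr fun n => ?_
  rw [one_div_aZR α (by omega)]
  rw [Real.rpow_neg (by positivity), one_div]

lemma tail_bound {α : ℝ} (hα : 1 < α) (M N : ℕ) (hM : 1 ≤ M) :
    ∑ m ∈ Finset.Icc M N, (m : ℝ) ^ (-α) ≤ (1 + (α - 1)⁻¹) * (M : ℝ) ^ (1 - α) := by
  have hα0 : (0:ℝ) < α - 1 := by linarith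
  have hMR : (1:ℝ) ≤ (M:ℝ) := by exact_mod_cast hM
  have hMpos : (0:ℝ) < (M:ℝ) := by linarith
  have hRHS0 : (0:ℝ) ≤ (M:ℝ) ^ (1 - α) := (Real.rpow_pos_of_pos hMpos _).le
  rcases le_or_gt M N with hMN | hNM
  swap
  · rw [Finset.Icc_eq_empty_of_lt hNM, Finset.sum_empty]
    positivity
  rw [Finset.Icc_eq_cons_Ioc hMN, Finset.sum_cons]
  have h1 : (M:ℝ) ^ (-α) ≤ (M:ℝ) ^ (1-α) :=
    Real.rpow_le_rpow_of_exponent_le hMR (by linarith)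
  have h2 : ∑ m ∈ Finset.Ioc M N, (m : ℝ) ^ (-α) ≤ (α-1)⁻¹ * (M:ℝ) ^ (1-α) := by
    have hre : ∑ m ∈ Finset.Ioc M N, (m : ℝ) ^ (-α)
        = ∑ i ∈ Finset.Ico M N, ((i+1 : ℕ) : ℝ) ^ (-α) := by
      rw [← Finset.Ico_add_one_add_one_eq_Ioc,
        ← Finset.map_add_right_Ico, Finset.sum_map]
      rfl
    have hanti : AntitoneOn (fun x : ℝ => x ^ (-α)) (Set.Icc (M:ℝ) (N:ℝ)) := by
      intro s hs t ht hst
      exact Real.rpow_le_rpow_of_nonpos (lt_of_lt_of_le hMpos hs.1) hst (by linarith)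
    have hint := AntitoneOn.sum_le_integral_Ico hMN hanti
    rw [hre]
    refine le_trans hint ?_
    have hMleN : (M:ℝ) ≤ (N:ℝ) := by exact_mod_cast hMN
    rw [integral_rpow (Or.inr ⟨by intro h; linarith, by
      rw [Set.uIcc_of_le hMleN]
      intro h
      rw [Set.mem_Icc] at h
      linarith [h.1]⟩)]
    have hNpos : (0:ℝ) < (N:ℝ) := lt_of_lt_of_le hMpos hMleN
    have hN0 : (0:ℝ) ≤ (N:ℝ) ^ (-α+1) := (Real.rpow_pos_of_pos hNpos _).le
    have hexp : (1:ℝ) - α = -α + 1 := by ring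
    rw [hexp]
    rw [div_le_iff_of_neg (by linarith : (-α+1:ℝ) < 0)]
    have : (α-1)⁻¹ * (M:ℝ)^(-α+1) * (-α+1) = -((M:ℝ)^(-α+1)) := by
      field_simp
      ring
    rw [this]
    linarith
  linarith

theorem truncated_partition_function_bound (S : Type*) [Fintype S] [DecidableEq S]
    (hκ : 2 ≤ Fintype.card S) (α : ℝ) (hα : 1 < α) :
    ∃ C : ℝ, 0 < C ∧ ∀ ℓ N : ℕ, 0 < ℓ → ℓ < N →
      (N : ℝ) ^ α *
        ∑ η ∈ (confs S N).filter (fun η => ∀ x, η x ≤ N - ℓ),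
          ∏ x, 1 / aZR α (η x) ≤ C / (ℓ : ℝ) ^ (α - 1) := by
  classical
  set κ := Fintype.card S with hκdef
  have hκ0 : 0 < κ := by omega
  have hκR : (0:ℝ) < (κ:ℝ) := by exact_mod_cast hκ0
  have hα0 : (0:ℝ) < α - 1 := by linarith
  have hSne : Nonempty S := Fintype.card_pos_iff.mp (by omega)
  have hsum := summable_one_div_aZR hα
  set Zb := ∑' n : ℕ, 1 / aZR α n with hZbdef
  have hZb1 : (1:ℝ) ≤ Zb := by
    rw [hZbdef]
    have h0 : 1 / aZR α 0 ≤ ∑' n : ℕ, 1 / aZR α n :=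
      Summable.le_tsum hsum 0 (fun i _ => one_div_nonneg.2 (aZR_pos α i).le)
    simpa [aZR] using h0
  have hZb0 : (0:ℝ) < Zb := lt_of_lt_of_le one_pos hZb1
  set c := 1 + (α-1)⁻¹ with hcdef
  have hc0 : (0:ℝ) < c := by rw [hcdef]; positivity
  have hκα : (0:ℝ) < (κ:ℝ) ^ α := Real.rpow_pos_of_pos hκR _
  have hκα1 : (0:ℝ) < (κ:ℝ) ^ (α-1) := Real.rpow_pos_of_pos hκR _
  have hZbp : (0:ℝ) < Zb ^ (κ - 2) := pow_pos hZb0 _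
  refine ⟨(κ:ℝ)^2 * ((κ:ℝ)^α * (c * (κ:ℝ)^(α-1) * Zb^(κ-2))), by
    exact mul_pos (pow_pos hκR 2) (mul_pos hκα (mul_pos (mul_pos hc0 hκα1) hZbp)), ?_⟩
  intro ℓ N hℓ hℓN
  have hN0 : 0 < N := lt_trans hℓ hℓN
  have hNR : (0:ℝ) < (N:ℝ) := by exact_mod_cast hN0
  have hNα : (0:ℝ) < (N:ℝ)^α := Real.rpow_pos_of_pos hNR _
  have hℓR : (0:ℝ) < (ℓ:ℝ) := by exact_mod_cast hℓ
  have hℓα : (0:ℝ) < (ℓ:ℝ)^(α-1) := Real.rpow_pos_of_pos hℓR _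
  set A := (confs S N).filter (fun η => ∀ x, η x ≤ N - ℓ) with hA
  -- basic facts about members of A
  have hmemA : ∀ η ∈ A, (∀ z, η z ≤ N) ∧ (∑ z, η z = N) ∧ (∀ z, η z ≤ N - ℓ) := by
    intro η hη
    rw [hA, Finset.mem_filter] at hη
    obtain ⟨hconf, hcap⟩ := hη
    rw [confs, Finset.mem_filter, Fintype.mem_piFinset] at hconf
    refine ⟨fun z => ?_, hconf.2, hcap⟩
    have := hconf.1 z
    rw [Finset.mem_range] at this
    omega
  have hw0 : ∀ η : S → ℕ, (0:ℝ) ≤ ∏ x, 1 / aZR α (η x) :=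
    fun η => Finset.prod_nonneg (fun x _ => one_div_nonneg.2 (aZR_pos α (η x)).le)
  -- Step 1: covering
  have cover : ∀ η ∈ A, ∃ p : S × S, p ∈ (Finset.univ : Finset S).offDiag ∧
      N ≤ κ * η p.1 ∧ ℓ ≤ κ * η p.2 := by
    intro η hη
    obtain ⟨hle, hsumN, hcap⟩ := hmemA η hη
    have hx : ∃ x : S, N ≤ κ * η x := by
      by_contra h
      push_neg at h
      have hlt := Finset.sum_lt_sum_of_nonempty (Finset.univ_nonempty) (fun x _ => h x)
      rw [← Finset.mul_sum, hsumN, Finset.sum_const, Finset.card_univ, smul_eq_mul,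
        ← hκdef] at hlt
      omega
    obtain ⟨x, hxN⟩ := hx
    have hsplit : η x + ∑ z ∈ Finset.univ.erase x, η z = N := by
      rw [Finset.add_sum_erase _ _ (Finset.mem_univ x), hsumN]
    have hrest : ℓ ≤ ∑ z ∈ Finset.univ.erase x, η z := by
      have h2 : η x ≤ N - ℓ := hcap x
      omega
    have hy : ∃ y ∈ Finset.univ.erase x, ℓ ≤ κ * η y := by
      by_contra h
      push_neg at h
      have hne : (Finset.univ.erase x).Nonempty := by
        rw [← Finset.card_pos, Finset.card_erase_of_mem (Finset.mem_univ x),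
          Finset.card_univ, ← hκdef]
        omega
      have hlt := Finset.sum_lt_sum_of_nonempty hne (fun z hz => h z hz)
      rw [← Finset.mul_sum, Finset.sum_const, Finset.card_erase_of_mem (Finset.mem_univ x),
        Finset.card_univ, ← hκdef, smul_eq_mul] at hlt
      have h3 : (κ - 1) * ℓ ≤ κ * ℓ := Nat.mul_le_mul_right ℓ (Nat.sub_le κ 1)
      have h4 : κ * ℓ ≤ κ * ∑ z ∈ Finset.univ.erase x, η z := Nat.mul_le_mul_left κ hrest
      omega
    obtain ⟨y, hy', hyℓ⟩ := hy
    rw [Finset.mem_erase] at hy'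
    exact ⟨(x, y), Finset.mem_offDiag.2 ⟨Finset.mem_univ x, Finset.mem_univ y, hy'.1.symm⟩,
      hxN, hyℓ⟩
  -- Step 2: pair bound
  have key : ∀ p ∈ (Finset.univ : Finset S).offDiag,
      ∑ η ∈ A.filter (fun η => N ≤ κ * η p.1 ∧ ℓ ≤ κ * η p.2), ∏ x, 1 / aZR α (η x)
        ≤ (κ:ℝ)^α / (N:ℝ)^α * (c * (κ:ℝ)^(α-1) / (ℓ:ℝ)^(α-1) * Zb^(κ-2)) := by
    intro p hp
    obtain ⟨x, y⟩ := p
    rw [Finset.mem_offDiag] at hp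
    have hxy : x ≠ y := hp.2.2
    set B := A.filter (fun η => N ≤ κ * η x ∧ ℓ ≤ κ * η y) with hB
    set t : S → Finset ℕ := fun z =>
      if z = x then {0} else if z = y then (Finset.range (N+1)).filter (fun m => ℓ ≤ κ * m)
      else Finset.range (N+1) with ht
    set h : S → ℕ → ℝ := fun z m => if z = x then 1 else 1 / aZR α m with hh
    -- (a) pointwise bound
    have ha : ∀ η ∈ B, ∏ z, 1 / aZR α (η z) ≤
        ((κ:ℝ)^α / (N:ℝ)^α) * ∏ z ∈ Finset.univ.erase x, (1 / aZR α (η z)) := by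
      intro η hη
      rw [hB, Finset.mem_filter] at hη
      obtain ⟨hηA, hηx, hηy⟩ := hη
      have hηx1 : 1 ≤ η x := by
        rcases Nat.eq_zero_or_pos (η x) with h0 | h1
        · rw [h0, Nat.mul_zero] at hηx; omega
        · exact h1
      have hfac : 1 / aZR α (η x) ≤ (κ:ℝ)^α / (N:ℝ)^α := by
        rw [aZR_of_pos α hηx1]
        have hcast : (N:ℝ) / (κ:ℝ) ≤ (η x : ℝ) := by
          rw [div_le_iff₀ hκR]
          calc (N:ℝ) ≤ ((κ * η x : ℕ) : ℝ) := by exact_mod_cast hηx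
          _ = (η x : ℝ) * (κ:ℝ) := by push_cast; ring
        have hNκpos : (0:ℝ) < (N:ℝ)/(κ:ℝ) := by positivity
        have hpow : ((N:ℝ)/(κ:ℝ))^α ≤ (η x : ℝ)^α :=
          Real.rpow_le_rpow hNκpos.le hcast (by linarith)
        have hpow0 : (0:ℝ) < ((N:ℝ)/(κ:ℝ))^α := Real.rpow_pos_of_pos hNκpos _
        calc 1 / (η x : ℝ)^α ≤ 1 / ((N:ℝ)/(κ:ℝ))^α :=
              one_div_le_one_div_of_le hpow0 hpow
        _ = (κ:ℝ)^α / (N:ℝ)^α := by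
              rw [Real.div_rpow hNR.le hκR.le, one_div_div]
      calc ∏ z, 1 / aZR α (η z)
          = (1 / aZR α (η x)) * ∏ z ∈ Finset.univ.erase x, (1 / aZR α (η z)) :=
            (Finset.mul_prod_erase _ _ (Finset.mem_univ x)).symm
      _ ≤ ((κ:ℝ)^α / (N:ℝ)^α) * ∏ z ∈ Finset.univ.erase x, (1 / aZR α (η z)) := by
            apply mul_le_mul_of_nonneg_right hfac
            exact Finset.prod_nonneg (fun z _ => one_div_nonneg.2 (aZR_pos α (η z)).le)
    -- (b) sum over B of erased product
    have hb : ∑ η ∈ B, ∏ z ∈ Finset.univ.erase x, (1 / aZR α (η z)) ≤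
        ∏ z, ∑ m ∈ t z, h z m := by
      have hinj : ∀ η ∈ B, ∀ η' ∈ B,
          Function.update η x 0 = Function.update η' x 0 → η = η' := by
        intro η hη η' hη'
        intro hupd
        have hηA := (Finset.mem_filter.1 hη).1
        have hη'A := (Finset.mem_filter.1 hη').1
        obtain ⟨_, hsN, _⟩ := hmemA η hηA
        obtain ⟨_, hsN', _⟩ := hmemA η' hη'A
        have hne : ∀ z, z ≠ x → η z = η' z := by
          intro z hz
          have := congrFun hupd z
          rwa [Function.update_of_ne hz, Function.update_of_ne hz] at this
        have hsplit : η x + ∑ z ∈ Finset.univ.erase x, η z = N := by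
          rw [Finset.add_sum_erase _ _ (Finset.mem_univ x), hsN]
        have hsplit' : η' x + ∑ z ∈ Finset.univ.erase x, η' z = N := by
          rw [Finset.add_sum_erase _ _ (Finset.mem_univ x), hsN']
        have hsame : ∑ z ∈ Finset.univ.erase x, η z = ∑ z ∈ Finset.univ.erase x, η' z :=
          Finset.sum_congr rfl (fun z hz => hne z (Finset.mem_erase.1 hz).1)
        funext z
        by_cases hzx : z = x
        · subst hzx; omega
        · exact hne z hzx
      have hF : ∀ η ∈ B, ∏ z ∈ Finset.univ.erase x, (1 / aZR α (η z)) =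
          ∏ z, h z (Function.update η x 0 z) := by
        intro η hη
        rw [← Finset.mul_prod_erase _ _ (Finset.mem_univ x)]
        rw [hh]
        simp only [eq_self_iff_true, if_true, one_mul]
        apply Finset.prod_congr rfl
        intro z hz
        have hzx := (Finset.mem_erase.1 hz).1
        rw [if_neg hzx, Function.update_of_ne hzx]
      rw [Finset.sum_congr rfl hF]
      have himg : ∑ η ∈ B, ∏ z, h z (Function.update η x 0 z)
          = ∑ g ∈ B.image (fun η => Function.update η x 0), ∏ z, h z (g z) :=
        (Finset.sum_image (g := fun η : S → ℕ => Function.update η x 0) (f := fun gg : S → ℕ => ∏ z, h z (gg z)) hinj).symm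
      rw [himg]
      have hsub : B.image (fun η => Function.update η x 0) ⊆ Fintype.piFinset t := by
        intro g hg
        rw [Finset.mem_image] at hg
        obtain ⟨η, hη, rfl⟩ := hg
        have hηA := (Finset.mem_filter.1 hη).1
        obtain ⟨hle, _, _⟩ := hmemA η hηA
        have hηy := (Finset.mem_filter.1 hη).2.2
        rw [Fintype.mem_piFinset]
        intro z
        simp only [ht]
        by_cases hzx : z = x
        · subst hzx; simp
        · rw [Function.update_of_ne hzx]
          simp only [if_neg hzx]
          by_cases hzy : z = y
          · subst hzy
            simp only [if_pos rfl]
            exact Finset.mem_filter.2 ⟨Finset.mem_range.2 (by have := hle z; omega), hηy⟩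
          · simp only [if_neg hzy, Finset.mem_range]
            have := hle z; omega
      calc ∑ g ∈ B.image (fun η => Function.update η x 0), ∏ z, h z (g z)
          ≤ ∑ g ∈ Fintype.piFinset t, ∏ z, h z (g z) := by
            apply Finset.sum_le_sum_of_subset_of_nonneg hsub
            intro g _ _
            apply Finset.prod_nonneg
            intro z _
            simp only [hh]
            split
            · norm_num
            · exact one_div_nonneg.2 (aZR_pos α (g z)).le
      _ = ∏ z, ∑ m ∈ t z, h z m := (Finset.prod_univ_sum t h).symm
    -- (c) evaluate the product
    have hc : ∏ z, ∑ m ∈ t z, h z m ≤ c * (κ:ℝ)^(α-1) / (ℓ:ℝ)^(α-1) * Zb^(κ-2) := by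
      set G : S → ℝ := fun z => ∑ m ∈ t z, h z m with hG
      have hGx : G x = 1 := by
        rw [hG, ht, hh]
        simp
      have hGnn : ∀ z, 0 ≤ G z := by
        intro z
        apply Finset.sum_nonneg
        intro m _
        simp only [hh]
        split
        · norm_num
        · exact one_div_nonneg.2 (aZR_pos α m).le
      have hGy : G y ≤ c * ((κ:ℝ)^(α-1) / (ℓ:ℝ)^(α-1)) := by
        have hGy0 : G y = ∑ m ∈ (Finset.range (N+1)).filter (fun m => ℓ ≤ κ * m),
            1 / aZR α m := by
          rw [hG]
          simp only [ht, hh, if_neg (Ne.symm hxy), if_pos rfl, eq_self_iff_true, if_true]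
        rw [hGy0]
        set M := Nat.ceil ((ℓ:ℝ)/(κ:ℝ)) with hM
        have hM1 : 1 ≤ M := by
          rw [hM, Nat.one_le_ceil_iff]
          positivity
        have hsub2 : (Finset.range (N+1)).filter (fun m => ℓ ≤ κ * m) ⊆ Finset.Icc M N := by
          intro m hm
          rw [Finset.mem_filter, Finset.mem_range] at hm
          rw [Finset.mem_Icc]
          constructor
          · rw [hM, Nat.ceil_le]
            rw [div_le_iff₀ hκR]
            calc (ℓ:ℝ) ≤ ((κ * m : ℕ):ℝ) := by exact_mod_cast hm.2
            _ = (m:ℝ) * (κ:ℝ) := by push_cast; ring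
          · omega
        calc ∑ m ∈ (Finset.range (N+1)).filter (fun m => ℓ ≤ κ * m), 1 / aZR α m
            = ∑ m ∈ (Finset.range (N+1)).filter (fun m => ℓ ≤ κ * m), (m:ℝ)^(-α) := by
              apply Finset.sum_congr rfl
              intro m hm
              rw [Finset.mem_filter] at hm
              have hm1 : 1 ≤ m := by
                rcases Nat.eq_zero_or_pos m with h0 | h1
                · exfalso; rw [h0, Nat.mul_zero] at hm; omega
                · exact h1
              rw [one_div_aZR α hm1]
        _ ≤ ∑ m ∈ Finset.Icc M N, (m:ℝ)^(-α) :=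
              Finset.sum_le_sum_of_subset_of_nonneg hsub2
                (fun m _ _ => Real.rpow_nonneg (Nat.cast_nonneg m) _)
        _ ≤ (1 + (α-1)⁻¹) * (M:ℝ)^(1-α) := tail_bound hα M N hM1
        _ ≤ c * ((ℓ:ℝ)/(κ:ℝ))^(1-α) := by
              rw [← hcdef]
              apply mul_le_mul_of_nonneg_left _ hc0.le
              exact Real.rpow_le_rpow_of_nonpos (by positivity) (Nat.le_ceil _) (by linarith)
        _ = c * ((κ:ℝ)^(α-1) / (ℓ:ℝ)^(α-1)) := by
              rw [show (1-α) = -(α-1) by ring, Real.rpow_neg (by positivity),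
                Real.div_rpow (Nat.cast_nonneg ℓ) (Nat.cast_nonneg κ), inv_div]
      have hyx : y ∈ Finset.univ.erase x :=
        Finset.mem_erase.2 ⟨Ne.symm hxy, Finset.mem_univ y⟩
      have hGle : ∀ z ∈ (Finset.univ.erase x).erase y, G z ≤ Zb := by
        intro z hz
        have hzy := (Finset.mem_erase.1 hz).1
        have hzx := (Finset.mem_erase.1 (Finset.mem_erase.1 hz).2).1
        have hGz : G z = ∑ m ∈ Finset.range (N+1), 1 / aZR α m := by
          rw [hG]
          simp only [ht, hh, if_neg hzx, if_neg hzy]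
        rw [hGz, hZbdef]
        exact Summable.sum_le_tsum _ (fun i _ => one_div_nonneg.2 (aZR_pos α i).le) hsum
      have hcard : ((Finset.univ.erase x).erase y).card = κ - 2 := by
        rw [Finset.card_erase_of_mem hyx, Finset.card_erase_of_mem (Finset.mem_univ x),
          Finset.card_univ, ← hκdef]
        omega
      have e3 : ∏ z ∈ (Finset.univ.erase x).erase y, G z ≤ Zb^(κ-2) := by
        calc ∏ z ∈ (Finset.univ.erase x).erase y, G z
            ≤ ∏ _z ∈ (Finset.univ.erase x).erase y, Zb :=
              Finset.prod_le_prod (fun z _ => hGnn z) (fun z hz => hGle z hz)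
        _ = Zb ^ (κ-2) := by rw [Finset.prod_const, hcard]
      calc ∏ z, ∑ m ∈ t z, h z m = ∏ z, G z := rfl
      _ = G x * ∏ z ∈ Finset.univ.erase x, G z :=
            (Finset.mul_prod_erase _ _ (Finset.mem_univ x)).symm
      _ = ∏ z ∈ Finset.univ.erase x, G z := by rw [hGx, one_mul]
      _ = G y * ∏ z ∈ (Finset.univ.erase x).erase y, G z :=
            (Finset.mul_prod_erase _ _ hyx).symm
      _ ≤ (c * ((κ:ℝ)^(α-1) / (ℓ:ℝ)^(α-1))) * Zb^(κ-2) := by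
            apply mul_le_mul hGy e3 (Finset.prod_nonneg (fun z _ => hGnn z))
            positivity
      _ = c * (κ:ℝ)^(α-1) / (ℓ:ℝ)^(α-1) * Zb^(κ-2) := by ring
    -- combine (a),(b),(c)
    calc ∑ η ∈ B, ∏ z, 1 / aZR α (η z)
        ≤ ∑ η ∈ B, ((κ:ℝ)^α / (N:ℝ)^α) * ∏ z ∈ Finset.univ.erase x, (1 / aZR α (η z)) :=
          Finset.sum_le_sum ha
    _ = ((κ:ℝ)^α / (N:ℝ)^α) * ∑ η ∈ B, ∏ z ∈ Finset.univ.erase x, (1 / aZR α (η z)) :=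
          (Finset.mul_sum _ _ _).symm
    _ ≤ ((κ:ℝ)^α / (N:ℝ)^α) * (c * (κ:ℝ)^(α-1) / (ℓ:ℝ)^(α-1) * Zb^(κ-2)) := by
          apply mul_le_mul_of_nonneg_left (hb.trans hc) (by positivity)
  -- Step 3: assemble
  have step2 : ∑ η ∈ A, ∏ z, 1 / aZR α (η z) ≤
      ∑ p ∈ (Finset.univ : Finset S).offDiag,
        ∑ η ∈ A.filter (fun η => N ≤ κ * η p.1 ∧ ℓ ≤ κ * η p.2), ∏ z, 1 / aZR α (η z) := by
    calc ∑ η ∈ A, ∏ z, 1 / aZR α (η z)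
        ≤ ∑ η ∈ A, ∑ p ∈ (Finset.univ : Finset S).offDiag,
            (if N ≤ κ * η p.1 ∧ ℓ ≤ κ * η p.2 then ∏ z, 1 / aZR α (η z) else 0) := by
          apply Finset.sum_le_sum
          intro η hη
          obtain ⟨p, hp, hc1, hc2⟩ := cover η hη
          have hsingle := Finset.single_le_sum
            (f := fun q : S × S => if N ≤ κ * η q.1 ∧ ℓ ≤ κ * η q.2
                then ∏ z, 1 / aZR α (η z) else 0)
            (fun q _ => by split; exacts [hw0 η, le_refl 0]) hp
          simpa [hc1, hc2] using hsingle
    _ = ∑ p ∈ (Finset.univ : Finset S).offDiag, ∑ η ∈ A,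
            (if N ≤ κ * η p.1 ∧ ℓ ≤ κ * η p.2 then ∏ z, 1 / aZR α (η z) else 0) :=
          Finset.sum_comm
    _ = ∑ p ∈ (Finset.univ : Finset S).offDiag,
          ∑ η ∈ A.filter (fun η => N ≤ κ * η p.1 ∧ ℓ ≤ κ * η p.2), ∏ z, 1 / aZR α (η z) :=
          Finset.sum_congr rfl (fun p _ => (Finset.sum_filter _ _).symm)
  have hcardoff : (((Finset.univ : Finset S).offDiag.card : ℝ)) ≤ (κ:ℝ)^2 := by
    rw [Finset.offDiag_card, Finset.card_univ, ← hκdef]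
    calc ((κ * κ - κ : ℕ) : ℝ) ≤ ((κ * κ : ℕ) : ℝ) := by
          exact_mod_cast Nat.sub_le (κ*κ) κ
    _ = (κ:ℝ)^2 := by push_cast; ring
  have hboundnn : (0:ℝ) ≤ (κ:ℝ)^α / (N:ℝ)^α * (c * (κ:ℝ)^(α-1) / (ℓ:ℝ)^(α-1) * Zb^(κ-2)) := by
    positivity
  have hsumA : ∑ η ∈ A, ∏ z, 1 / aZR α (η z) ≤
      (κ:ℝ)^2 * ((κ:ℝ)^α / (N:ℝ)^α * (c * (κ:ℝ)^(α-1) / (ℓ:ℝ)^(α-1) * Zb^(κ-2))) := by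
    refine step2.trans ?_
    calc ∑ p ∈ (Finset.univ : Finset S).offDiag,
          ∑ η ∈ A.filter (fun η => N ≤ κ * η p.1 ∧ ℓ ≤ κ * η p.2), ∏ z, 1 / aZR α (η z)
        ≤ ∑ _p ∈ (Finset.univ : Finset S).offDiag,
            ((κ:ℝ)^α / (N:ℝ)^α * (c * (κ:ℝ)^(α-1) / (ℓ:ℝ)^(α-1) * Zb^(κ-2))) :=
          Finset.sum_le_sum key
    _ = ((Finset.univ : Finset S).offDiag.card : ℝ) *
            ((κ:ℝ)^α / (N:ℝ)^α * (c * (κ:ℝ)^(α-1) / (ℓ:ℝ)^(α-1) * Zb^(κ-2))) := by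
          rw [Finset.sum_const, nsmul_eq_mul]
    _ ≤ (κ:ℝ)^2 * ((κ:ℝ)^α / (N:ℝ)^α * (c * (κ:ℝ)^(α-1) / (ℓ:ℝ)^(α-1) * Zb^(κ-2))) :=
          mul_le_mul_of_nonneg_right hcardoff hboundnn
  calc (N:ℝ)^α * ∑ η ∈ A, ∏ z, 1 / aZR α (η z)
      ≤ (N:ℝ)^α * ((κ:ℝ)^2 * ((κ:ℝ)^α / (N:ℝ)^α * (c * (κ:ℝ)^(α-1) / (ℓ:ℝ)^(α-1) * Zb^(κ-2)))) :=
        mul_le_mul_of_nonneg_left hsumA hNα.le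
  _ = (κ:ℝ)^2 * ((κ:ℝ)^α * (c * (κ:ℝ)^(α-1) * Zb^(κ-2))) / (ℓ:ℝ)^(α-1) := by
        field_simp
end

section
/- For α > 1, I_α := ∫₀¹ u^α (1−u)^α du is finite and strictly positive, and for each fixed integer k ≥ 0 and sequence ℓ_N with ℓ_N → ∞ and ℓ_N/N → 0, one has N^{1+2α} · [ Σ_{i=ℓ_N−k}^{N−ℓ_N−1} a(i) a(N−1−k−i) ]^{−1} → 1/I_α as N → ∞, where a(0)=1, a(n)=n^α. -/
open MeasureTheory Filter Set

/-- Integral of a step function given by the floor of `N * u`. -/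
lemma integral_floor_step (f : ℕ → ℝ) (N : ℕ) (hN : 1 ≤ N) :
    ∫ u in Set.Ico (0:ℝ) 1, f ⌊(N:ℝ) * u⌋₊ = (∑ i ∈ Finset.range N, f i) / N := by
  have hN' : (0:ℝ) < N := by exact_mod_cast hN
  have hunion : Set.Ico (0:ℝ) 1 = ⋃ i ∈ Finset.range N, Set.Ico ((i:ℝ)/N) (((i:ℝ)+1)/N) := by
    ext x
    simp only [Set.mem_iUnion, Finset.mem_range, Set.mem_Ico]
    constructor
    · rintro ⟨hx0, hx1⟩
      have hx0' : (0:ℝ) ≤ (N:ℝ) * x := by positivity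
      refine ⟨⌊(N:ℝ)*x⌋₊, ?_, ?_, ?_⟩
      · rw [Nat.floor_lt hx0']
        nlinarith
      · rw [div_le_iff₀ hN']
        have := Nat.floor_le hx0'
        linarith [this, mul_comm (N:ℝ) x]
      · rw [lt_div_iff₀ hN']
        have := Nat.lt_floor_add_one ((N:ℝ)*x)
        linarith [this, mul_comm (N:ℝ) x]
    · rintro ⟨i, hiN, h1, h2⟩
      have hi1 : (i:ℝ) + 1 ≤ N := by exact_mod_cast hiN
      constructor
      · have : (0:ℝ) ≤ (i:ℝ)/N := by positivity
        linarith
      · have : ((i:ℝ)+1)/N ≤ 1 := by rw [div_le_one hN']; linarith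
        linarith
  have heq : ∀ i : ℕ, Set.EqOn (fun u : ℝ => f ⌊(N:ℝ)*u⌋₊) (fun _ => f i)
      (Set.Ico ((i:ℝ)/N) (((i:ℝ)+1)/N)) := by
    intro i u hu
    simp only
    congr 1
    rw [Nat.floor_eq_iff (by nlinarith [hu.1, (by positivity : (0:ℝ) ≤ (i:ℝ)/N)] : (0:ℝ) ≤ (N:ℝ)*u)]
    rw [Set.mem_Ico, div_le_iff₀ hN', lt_div_iff₀ hN'] at hu
    constructor
    · linarith [hu.1, mul_comm (N:ℝ) u]
    · linarith [hu.2, mul_comm (N:ℝ) u]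
  rw [hunion, MeasureTheory.integral_biUnion_finset _ (fun i _ => measurableSet_Ico)
    ?_ ?_]
  · have hstep : ∀ i ∈ Finset.range N,
        (∫ u in Set.Ico ((i:ℝ)/N) (((i:ℝ)+1)/N), f ⌊(N:ℝ)*u⌋₊) = f i / N := by
      intro i _
      rw [MeasureTheory.setIntegral_congr_fun measurableSet_Ico (heq i),
        MeasureTheory.setIntegral_const, MeasureTheory.measureReal_def, Real.volume_Ico]
      have h : ((i:ℝ)+1)/N - (i:ℝ)/N = 1/N := by field_simp; ring
      rw [h, ENNReal.toReal_ofReal (by positivity), smul_eq_mul]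
      ring
    rw [Finset.sum_congr rfl hstep, ← Finset.sum_div]
  · intro i _ j _ hij
    simp only [Function.onFun]
    rw [Set.disjoint_left]
    rintro x ⟨hi1, hi2⟩ ⟨hj1, hj2⟩
    rcases lt_or_gt_of_ne hij with h | h
    · have hij' : (i:ℝ) + 1 ≤ j := by exact_mod_cast h
      have : ((i:ℝ)+1)/N ≤ (j:ℝ)/N := by gcongr
      linarith
    · have hij' : (j:ℝ) + 1 ≤ i := by exact_mod_cast h
      have : ((j:ℝ)+1)/N ≤ (i:ℝ)/N := by gcongr
      linarith
  · intro i _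
    rw [integrableOn_congr_fun (heq i) measurableSet_Ico]
    exact integrableOn_const measure_Ico_lt_top.ne

theorem Ialpha_and_sum_asymptotics (α : ℝ) (hα : 1 < α)
    (Iα : ℝ) (hIα : Iα = ∫ u in (0:ℝ)..1, u ^ α * (1 - u) ^ α)
    (k : ℕ) (ℓ : ℕ → ℕ)
    (hℓ : Filter.Tendsto ℓ Filter.atTop Filter.atTop)
    (hℓN : Filter.Tendsto (fun N : ℕ => (ℓ N : ℝ) / (N : ℝ)) Filter.atTop (nhds 0)) :
    0 < Iα ∧
      Filter.Tendsto
        (fun N : ℕ => (N : ℝ) ^ ((1 : ℝ) + 2 * α) *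
          (∑ i ∈ Finset.Icc (ℓ N - k) (N - ℓ N - 1),
            aZR α i * aZR α (N - 1 - k - i))⁻¹)
        Filter.atTop (nhds (1 / Iα)) := by
  have hα0 : (0:ℝ) < α := lt_trans one_pos hα
  have hcont : Continuous (fun u : ℝ => u ^ α * (1 - u) ^ α) := by
    have h1 : Continuous (fun u : ℝ => u ^ α) := Real.continuous_rpow_const hα0.le
    exact h1.mul (h1.comp (continuous_const.sub continuous_id))
  have hIpos : 0 < Iα := by
    rw [hIα]
    apply intervalIntegral.intervalIntegral_pos_of_pos_on
    · exact hcont.intervalIntegrable 0 1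
    · intro x hx
      have h1 := Real.rpow_pos_of_pos hx.1 α
      have h2 := Real.rpow_pos_of_pos (by linarith [hx.2] : (0:ℝ) < 1 - x) α
      positivity
    · norm_num
  refine ⟨hIpos, ?_⟩
  set F : ℕ → ℕ → ℝ := fun N i =>
    if i ∈ Finset.Icc (ℓ N - k) (N - ℓ N - 1)
    then ((i:ℝ) ^ α * ((N - 1 - k - i : ℕ) : ℝ) ^ α) / (N:ℝ) ^ (2*α) else 0 with hF
  -- the target integral
  have hIco : Iα = ∫ u in Set.Ico (0:ℝ) 1, u ^ α * (1 - u) ^ α := by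
    rw [hIα, intervalIntegral.integral_of_le (by norm_num : (0:ℝ) ≤ 1),
      MeasureTheory.integral_Ioc_eq_integral_Ioo, MeasureTheory.integral_Ico_eq_integral_Ioo]
  -- dominated convergence
  have key : Tendsto (fun N : ℕ => ∫ u in Set.Ico (0:ℝ) 1, F N ⌊(N:ℝ)*u⌋₊) atTop (nhds Iα) := by
    rw [hIco]
    apply MeasureTheory.tendsto_integral_filter_of_dominated_convergence
      (bound := fun _ => (1:ℝ))
    · refine Filter.Eventually.of_forall fun N => ?_
      have hm : Measurable fun u : ℝ => ⌊(N:ℝ)*u⌋₊ :=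
        Measurable.nat_floor (measurable_id.const_mul (N:ℝ))
      exact ((measurable_from_nat (f := F N)).comp hm).aestronglyMeasurable
    · filter_upwards [eventually_ge_atTop 1] with N hN
      refine MeasureTheory.ae_of_all _ fun u => ?_
      have hN' : (0:ℝ) < N := by exact_mod_cast hN
      rw [hF]
      simp only
      split_ifs with h
      · rw [Finset.mem_Icc] at h
        have hi1 : ((⌊(N:ℝ)*u⌋₊ : ℕ):ℝ) ≤ (N:ℝ) := by
          exact_mod_cast Nat.le_of_lt_succ (by omega : ⌊(N:ℝ)*u⌋₊ < N + 1)
        have hi2 : ((N - 1 - k - ⌊(N:ℝ)*u⌋₊ : ℕ):ℝ) ≤ (N:ℝ) := by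
          exact_mod_cast (by omega : N - 1 - k - ⌊(N:ℝ)*u⌋₊ ≤ N)
        rw [Real.norm_eq_abs, abs_of_nonneg (by positivity), div_le_one (by positivity)]
        have b1 : ((⌊(N:ℝ)*u⌋₊ : ℕ):ℝ) ^ α ≤ (N:ℝ) ^ α :=
          Real.rpow_le_rpow (by positivity) hi1 hα0.le
        have b2 : ((N - 1 - k - ⌊(N:ℝ)*u⌋₊ : ℕ):ℝ) ^ α ≤ (N:ℝ) ^ α :=
          Real.rpow_le_rpow (by positivity) hi2 hα0.le
        calc ((⌊(N:ℝ)*u⌋₊ : ℕ):ℝ) ^ α * ((N - 1 - k - ⌊(N:ℝ)*u⌋₊ : ℕ):ℝ) ^ α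
            ≤ (N:ℝ) ^ α * (N:ℝ) ^ α := by
              apply mul_le_mul b1 b2 (by positivity) (by positivity)
          _ = (N:ℝ) ^ (2*α) := by
              rw [(by ring : 2*α = α + α), Real.rpow_add hN']
      · simp
    · exact MeasureTheory.integrableOn_const measure_Ico_lt_top.ne
    · have h0 : ∀ᵐ u : ℝ ∂(volume.restrict (Set.Ico (0:ℝ) 1)), u ≠ (0:ℝ) := by
        refine MeasureTheory.ae_restrict_of_ae ?_
        rw [MeasureTheory.ae_iff]
        simpa using Real.volume_singleton
      have hmem : ∀ᵐ u : ℝ ∂(volume.restrict (Set.Ico (0:ℝ) 1)), u ∈ Set.Ico (0:ℝ) 1 :=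
        MeasureTheory.ae_restrict_mem measurableSet_Ico
      filter_upwards [h0, hmem] with u hu0 humem
      have hu : u ∈ Set.Ioo (0:ℝ) 1 := ⟨lt_of_le_of_ne humem.1 (Ne.symm hu0), humem.2⟩
      -- pointwise convergence at u
      set j : ℕ → ℕ := fun N => ⌊(N:ℝ)*u⌋₊ with hj
      have hu1 : 0 < u := hu.1
      have hu2 : u < 1 := hu.2
      have hjle : ∀ N : ℕ, (j N : ℝ) ≤ (N:ℝ)*u := fun N => Nat.floor_le (by positivity)
      have hjgt : ∀ N : ℕ, (N:ℝ)*u - 1 < (j N : ℝ) := fun N => by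
        have := Nat.lt_floor_add_one ((N:ℝ)*u); push_cast; linarith
      -- j N / N → u
      have hjdiv : Tendsto (fun N : ℕ => (j N : ℝ)/(N:ℝ)) atTop (nhds u) := by
        apply tendsto_of_tendsto_of_tendsto_of_le_of_le'
          (g := fun N : ℕ => u - 1/(N:ℝ)) (h := fun _ : ℕ => u)
        · simpa using (tendsto_const_nhds (x := u)).sub tendsto_one_div_atTop_nhds_zero_nat
        · exact tendsto_const_nhds
        · filter_upwards [eventually_ge_atTop 1] with N hN
          have hN' : (0:ℝ) < N := by exact_mod_cast hN
          rw [sub_le_iff_le_add, ← add_div, le_div_iff₀ hN']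
          have := hjgt N
          nlinarith
        · filter_upwards [eventually_ge_atTop 1] with N hN
          have hN' : (0:ℝ) < N := by exact_mod_cast hN
          rw [div_le_iff₀ hN']
          have := hjle N
          nlinarith
      -- eventual equality and conditions
      have hev1 : ∀ᶠ N : ℕ in atTop, (ℓ N : ℝ) < (N:ℝ) * u / 2 ∧ (ℓ N : ℝ) < (N:ℝ) * (1-u) / 2 := by
        have hmin : (0:ℝ) < min u (1-u) / 2 := by
          have : (0:ℝ) < min u (1-u) := lt_min hu1 (by linarith)
          linarith
        have h1 := hℓN.eventually (eventually_lt_nhds hmin)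
        filter_upwards [h1, eventually_ge_atTop 1] with N hlt hN
        have hN' : (0:ℝ) < N := by exact_mod_cast hN
        have hlt' : (ℓ N : ℝ) < N * (min u (1-u) / 2) := by
          rw [div_lt_iff₀ hN'] at hlt; linarith
        constructor
        · calc (ℓ N : ℝ) < N * (min u (1-u) / 2) := hlt'
            _ ≤ N * u / 2 := by
              have : min u (1-u) ≤ u := min_le_left _ _
              nlinarith
        · calc (ℓ N : ℝ) < N * (min u (1-u) / 2) := hlt'
            _ ≤ N * (1-u) / 2 := by
              have : min u (1-u) ≤ 1-u := min_le_right _ _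
              nlinarith
      have hev2 : ∀ᶠ N : ℕ in atTop, (2:ℝ)/u ≤ (N:ℝ) ∧ (2:ℝ)/(1-u) ≤ (N:ℝ) :=
        (tendsto_natCast_atTop_atTop.eventually_ge_atTop ((2:ℝ)/u)).and
          (tendsto_natCast_atTop_atTop.eventually_ge_atTop ((2:ℝ)/(1-u)))
      have hev3 : ∀ᶠ N : ℕ in atTop, k + 2 ≤ ℓ N := hℓ.eventually_ge_atTop (k+2)
      have hcond : ∀ᶠ N : ℕ in atTop,
          (j N ∈ Finset.Icc (ℓ N - k) (N - ℓ N - 1)) ∧ j N + ℓ N + 1 ≤ N ∧ k + 2 ≤ ℓ N := by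
        filter_upwards [hev1, hev2, hev3, eventually_ge_atTop 1] with N h1 h2 h3 hN
        have hN' : (0:ℝ) < N := by exact_mod_cast hN
        have hu1' : (1:ℝ) ≤ (N:ℝ)*u/2 := by
          rw [div_le_iff₀ hu1] at h2; rcases h2 with ⟨h2a, _⟩; nlinarith
        have hu2' : (1:ℝ) ≤ (N:ℝ)*(1-u)/2 := by
          have h2b := h2.2
          rw [div_le_iff₀ (by linarith : (0:ℝ) < 1-u)] at h2b
          nlinarith
        have hA : (ℓ N : ℝ) < (j N : ℝ) := by
          have := hjgt N
          have := h1.1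
          linarith
        have hAnat : ℓ N ≤ j N := le_of_lt (by exact_mod_cast hA)
        have hB : (j N : ℝ) + (ℓ N : ℝ) + 1 ≤ (N:ℝ) := by
          have := hjle N
          have := h1.2
          nlinarith
        have hBnat : j N + ℓ N + 1 ≤ N := by exact_mod_cast hB
        refine ⟨Finset.mem_Icc.mpr ⟨by omega, by omega⟩, hBnat, h3⟩
      have hval : ∀ᶠ N : ℕ in atTop,
          F N (j N) = ((j N : ℝ)/(N:ℝ)) ^ α * (((N:ℝ) - 1 - k)/(N:ℝ) - (j N : ℝ)/(N:ℝ)) ^ α := by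
        filter_upwards [hcond, eventually_ge_atTop 1] with N hc hN
        have hN' : (0:ℝ) < N := by exact_mod_cast hN
        obtain ⟨hmem, hB, hk2⟩ := hc
        rw [hF]
        simp only [if_pos hmem]
        have hcast : ((N - 1 - k - j N : ℕ):ℝ) = (N:ℝ) - 1 - k - (j N : ℝ) := by
          have h1 : j N + k + 1 ≤ N := by omega
          push_cast [Nat.sub_sub, Nat.cast_sub (by omega : 1 + k + j N ≤ N)]
          ring
        have hnn : (0:ℝ) ≤ (N:ℝ) - 1 - (k:ℝ) - (j N : ℝ) := by
          rw [← hcast]; positivity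
        rw [hcast, ← sub_div, Real.div_rpow (by positivity) hN'.le,
          Real.div_rpow hnn hN'.le, div_mul_div_comm,
          (by ring : 2*α = α + α), Real.rpow_add hN']
      have hlim2 : Tendsto (fun N : ℕ =>
          ((j N : ℝ)/(N:ℝ)) ^ α * (((N:ℝ) - 1 - k)/(N:ℝ) - (j N : ℝ)/(N:ℝ)) ^ α)
          atTop (nhds (u ^ α * (1-u) ^ α)) := by
        have hc1 : Tendsto (fun N : ℕ => ((N:ℝ) - 1 - k)/(N:ℝ)) atTop (nhds 1) := by
          have : (fun N : ℕ => ((N:ℝ) - 1 - k)/(N:ℝ)) =ᶠ[atTop]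
              (fun N : ℕ => 1 - (1 + (k:ℝ))/(N:ℝ)) := by
            filter_upwards [eventually_ge_atTop 1] with N hN
            have hN' : (0:ℝ) < N := by exact_mod_cast hN
            field_simp
            ring
          rw [tendsto_congr' this]
          have h2 : Tendsto (fun N : ℕ => (1 + (k:ℝ))/(N:ℝ)) atTop (nhds 0) :=
            tendsto_const_div_atTop_nhds_zero_nat _
          simpa using tendsto_const_nhds.sub h2
        have hsub : Tendsto (fun N : ℕ => ((N:ℝ) - 1 - k)/(N:ℝ) - (j N : ℝ)/(N:ℝ))
            atTop (nhds (1 - u)) := hc1.sub hjdiv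
        have hr1 : Tendsto (fun N : ℕ => ((j N : ℝ)/(N:ℝ)) ^ α) atTop (nhds (u ^ α)) :=
          ((Real.continuousAt_rpow_const u α (Or.inr hα0.le)).tendsto).comp hjdiv
        have hr2 : Tendsto (fun N : ℕ => (((N:ℝ) - 1 - k)/(N:ℝ) - (j N : ℝ)/(N:ℝ)) ^ α)
            atTop (nhds ((1-u) ^ α)) :=
          ((Real.continuousAt_rpow_const (1-u) α (Or.inr hα0.le)).tendsto).comp hsub
        exact hr1.mul hr2
      exact hlim2.congr' (by filter_upwards [hval] with N h using h.symm)
  -- identify the integral with the normalized sum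
  have hsum : ∀ᶠ N : ℕ in atTop, (∫ u in Set.Ico (0:ℝ) 1, F N ⌊(N:ℝ)*u⌋₊)
      = (∑ i ∈ Finset.Icc (ℓ N - k) (N - ℓ N - 1),
          aZR α i * aZR α (N - 1 - k - i)) / (N:ℝ)^((1:ℝ)+2*α) := by
    filter_upwards [eventually_ge_atTop 1, hℓ.eventually_ge_atTop (k+1)] with N hN hL
    have hN' : (0:ℝ) < N := by exact_mod_cast hN
    rw [integral_floor_step (F N) N hN]
    have hsub : Finset.Icc (ℓ N - k) (N - ℓ N - 1) ⊆ Finset.range N := by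
      intro i hi
      rw [Finset.mem_Icc] at hi
      rw [Finset.mem_range]
      omega
    have h1 : ∑ i ∈ Finset.range N, F N i
        = (∑ i ∈ Finset.Icc (ℓ N - k) (N - ℓ N - 1),
            aZR α i * aZR α (N - 1 - k - i)) / (N:ℝ)^(2*α) := by
      rw [hF]
      simp only
      rw [Finset.sum_ite_mem, Finset.inter_eq_right.mpr hsub, ← Finset.sum_div]
      congr 1
      apply Finset.sum_congr rfl
      intro i hi
      rw [Finset.mem_Icc] at hi
      rw [aZR, aZR, if_neg (by omega), if_neg (by omega)]
    rw [h1, div_div]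
    congr 1
    rw [Real.rpow_add hN', Real.rpow_one]
    ring
  have hT : Tendsto (fun N : ℕ => (∑ i ∈ Finset.Icc (ℓ N - k) (N - ℓ N - 1),
      aZR α i * aZR α (N - 1 - k - i)) / (N:ℝ)^((1:ℝ)+2*α)) atTop (nhds Iα) :=
    key.congr' hsum
  have hfinal := hT.inv₀ (ne_of_gt hIpos)
  rw [one_div]
  refine hfinal.congr fun N => ?_
  rw [inv_div, div_eq_mul_inv]
end

section
/- Let S be finite with |S| = κ ≥ 2, α > 1, m a probability measure on S with maximizer set S_⋆ and maximum value M_⋆, and r irreducible reversible jump rates. Let μ_N be the stationary measure of the zero-range process on E_N with rates g(k)r(x,y). Let ℓ_N → ∞ with ℓ_N/N → 0 and b_N(z) → ∞ for z ∉ S_⋆, and Δ_N the complement in E_N of ∪_{x∈S_⋆} E^x_N where E^x_N = {η : η_x ≥ N − ℓ_N, η_z ≤ b_N(z) ∀ z ∉ S_⋆}. Then μ_N(Δ_N) → 0 as N → ∞. -/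
open Filter Finset

set_option maxHeartbeats 2000000 in
theorem measure_of_DeltaN_vanishes (S : Type*) [Fintype S] [DecidableEq S]
    (hκ : 2 ≤ Fintype.card S) (α : ℝ) (hα : 1 < α)
    (m : S → ℝ) (hm : ∀ x, 0 < m x) (hm1 : ∑ x, m x = 1)
    (Mstar : ℝ) (hMstar : IsGreatest (Set.range m) Mstar)
    (Sstar : Finset S) (hSstar : Sstar = Finset.univ.filter (fun x => m x = Mstar))
    (mstar : S → ℝ) (hmstar : ∀ x, mstar x = m x / Mstar)
    (Z : ℕ → ℝ) (hZ : ∀ N, Z N = (N : ℝ) ^ α *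
      ∑ η ∈ confs S N, ∏ x, mstar x ^ η x / aZR α (η x))
    (μ : ℕ → (S → ℕ) → ℝ)
    (hμ : ∀ N η, μ N η = (N : ℝ) ^ α / Z N * ∏ x, mstar x ^ η x / aZR α (η x))
    (ℓ : ℕ → ℕ) (hℓ : Filter.Tendsto ℓ Filter.atTop Filter.atTop)
    (hℓN : Filter.Tendsto (fun N : ℕ => (ℓ N : ℝ) / (N : ℝ)) Filter.atTop (nhds 0))
    (b : S → ℕ → ℕ)
    (hb : ∀ z ∉ Sstar, Filter.Tendsto (b z) Filter.atTop Filter.atTop)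
    (E : S → ℕ → Finset (S → ℕ))
    (hE : ∀ x N, E x N = (confs S N).filter
      (fun η => N - ℓ N ≤ η x ∧ ∀ z ∉ Sstar, η z ≤ b z N))
    (Δ : ℕ → Finset (S → ℕ))
    (hΔ : ∀ N, Δ N = confs S N \ Sstar.biUnion (fun x => E x N)) :
    Filter.Tendsto (fun N => ∑ η ∈ Δ N, μ N η) Filter.atTop (nhds 0) := by
  classical
  obtain ⟨x₀, hx₀⟩ := hMstar.1
  have hM : 0 < Mstar := hx₀ ▸ hm x₀
  have hx₀star : x₀ ∈ Sstar := by rw [hSstar]; simp [hx₀]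
  set κ' := Fintype.card S with hκ'
  have hκpos : 0 < κ' := by omega
  -- basic facts about mstar
  have hms_pos : ∀ x, 0 < mstar x := fun x => by rw [hmstar]; exact div_pos (hm x) hM
  have hms_le1 : ∀ x, mstar x ≤ 1 := fun x => by
    rw [hmstar]; exact div_le_one_of_le₀ (hMstar.2 ⟨x, rfl⟩) hM.le
  have hms_star : ∀ x ∈ Sstar, mstar x = 1 := by
    intro x hx; rw [hSstar] at hx
    rw [hmstar, (Finset.mem_filter.1 hx).2, div_self hM.ne']
  have hms_lt1 : ∀ x ∉ Sstar, mstar x < 1 := by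
    intro x hx
    rcases lt_or_eq_of_le (hms_le1 x) with h | h
    · exact h
    · exfalso; apply hx; rw [hSstar]
      simp only [Finset.mem_filter, Finset.mem_univ, true_and]
      have h2 := hmstar x
      rw [h] at h2
      field_simp at h2
      linarith [h2]
  -- basic facts about aZR
  have ha_pos : ∀ k, 0 < aZR α k := by
    intro k; unfold aZR; split
    · norm_num
    · next h => exact Real.rpow_pos_of_pos (by exact_mod_cast Nat.pos_of_ne_zero h) α
  -- weight functions
  set f : S → ℕ → ℝ := fun x k => mstar x ^ k / aZR α k with hfdef
  set W : (S → ℕ) → ℝ := fun η => ∏ x, f x (η x) with hWdef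
  have hWeq : ∀ η : S → ℕ, (∏ x, mstar x ^ η x / aZR α (η x)) = W η := fun η => rfl
  have hf_pos : ∀ x k, 0 < f x k := fun x k => div_pos (pow_pos (hms_pos x) k) (ha_pos k)
  have hf0 : ∀ x, f x 0 = 1 := fun x => by simp [hfdef, aZR]
  have hW_nonneg : ∀ η, 0 ≤ W η := fun η => Finset.prod_nonneg fun x _ => (hf_pos x (η x)).le
  set g : ℕ → ℝ := fun k => (aZR α k)⁻¹ with hgdef
  have hg_nonneg : ∀ k, 0 ≤ g k := fun k => inv_nonneg.2 (ha_pos k).le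
  have hfg : ∀ x k, f x k ≤ g k := by
    intro x k
    have h1 : mstar x ^ k ≤ 1 := pow_le_one₀ (hms_pos x).le (hms_le1 x)
    calc f x k = mstar x ^ k * (aZR α k)⁻¹ := div_eq_mul_inv _ _
      _ ≤ 1 * (aZR α k)⁻¹ := mul_le_mul_of_nonneg_right h1 (inv_nonneg.2 (ha_pos k).le)
      _ = g k := by rw [one_mul]
  -- summability
  have hg_sum : Summable g := by
    have h1 : Summable (fun k : ℕ => ((k : ℝ) ^ α)⁻¹) := Real.summable_nat_rpow_inv.2 hα
    have h2 : Summable (fun k : ℕ => g (k + 1)) := by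
      refine ((summable_nat_add_iff 1).2 h1).congr fun k => ?_
      simp [hgdef, aZR]
    exact (summable_nat_add_iff 1).1 h2
  set C1 := ∑' k, g k with hC1def
  have hC1_ge1 : 1 ≤ C1 := by
    have h1 := Summable.le_tsum hg_sum 0 (fun j _ => hg_nonneg j)
    have h2 : g 0 = 1 := by simp [hgdef, aZR]
    rw [h2] at h1; exact h1
  have hC1_pos : (0:ℝ) < C1 := lt_of_lt_of_le one_pos hC1_ge1
  have hsum_le : ∀ (s : Finset ℕ) (x : S), ∑ k ∈ s, f x k ≤ C1 := by
    intro s x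
    calc ∑ k ∈ s, f x k ≤ ∑ k ∈ s, g k := Finset.sum_le_sum fun k _ => hfg x k
      _ ≤ C1 := Summable.sum_le_tsum s (fun k _ => hg_nonneg k) hg_sum
  set T : ℕ → ℝ := fun t => ∑' k, g (k + t) with hTdef
  have hT_nonneg : ∀ t, 0 ≤ T t := fun t => tsum_nonneg fun k => hg_nonneg _
  have hT0C1 : T 0 = C1 := by simp [hTdef, hC1def]
  have hTtend : Filter.Tendsto T Filter.atTop (nhds 0) := tendsto_sum_nat_add g
  have htail : ∀ (s : Finset ℕ) (t : ℕ) (x : S), (∀ k ∈ s, t ≤ k) → ∑ k ∈ s, f x k ≤ T t := by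
    intro s t x hs
    have h1 : ∑ k ∈ s, f x k ≤ ∑ k ∈ s, g k := Finset.sum_le_sum fun k _ => hfg x k
    have h2 : ∑ k ∈ s, g k = ∑ j ∈ s.image (· - t), g (j + t) := by
      rw [Finset.sum_image (by intro a ha b hb hab; simp only at hab; have := hs a ha; have := hs b hb; omega)]
      exact Finset.sum_congr rfl fun k hk => by rw [Nat.sub_add_cancel (hs k hk)]
    have h3 : ∑ j ∈ s.image (· - t), g (j + t) ≤ T t :=
      Summable.sum_le_tsum _ (fun j _ => hg_nonneg _) ((summable_nat_add_iff t).2 hg_sum)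
    linarith
  -- membership in confs
  have hconfs_mem : ∀ (N : ℕ) (η : S → ℕ), η ∈ confs S N → (∑ x, η x = N) ∧ ∀ z, η z ≤ N := by
    intro N η hη
    rw [confs, Finset.mem_filter] at hη
    refine ⟨hη.2, fun z => ?_⟩
    have h1 := (Fintype.mem_piFinset.1 hη.1) z
    simpa [Nat.lt_succ_iff] using h1
  -- core estimate
  have core : ∀ (N t : ℕ) (x y : S), x ≠ y → ∀ B : Finset (S → ℕ),
      (∀ η ∈ B, η ∈ confs S N) → (∀ η ∈ B, t ≤ η y) →
      ∑ η ∈ B, ∏ z ∈ Finset.univ.erase x, f z (η z) ≤ T t * C1 ^ κ' := by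
    intro N t x y hxy B hBc hBy
    set u : S → ℕ → ℝ := fun z k => if z = x then (if k = 0 then 1 else 0) else f z k with hu
    have hu_nonneg : ∀ z k, 0 ≤ u z k := by
      intro z k; rw [hu]; dsimp only
      split
      · split <;> norm_num
      · exact (hf_pos _ _).le
    set G : (S → ℕ) → ℝ := fun η => ∏ z, u z (η z) with hG
    have hG_nonneg : ∀ η, 0 ≤ G η := fun η => Finset.prod_nonneg fun z _ => hu_nonneg _ _
    have step1 : ∀ η : S → ℕ, ∏ z ∈ Finset.univ.erase x, f z (η z) = G (Function.update η x 0) := by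
      intro η
      rw [hG]; dsimp only
      rw [← Finset.mul_prod_erase Finset.univ _ (Finset.mem_univ x)]
      have h1 : u x (Function.update η x 0 x) = 1 := by simp [hu]
      rw [h1, one_mul]
      refine (Finset.prod_congr rfl ?_).symm
      intro z hz
      have hzx : z ≠ x := (Finset.mem_erase.1 hz).1
      rw [Function.update_of_ne hzx]
      simp [hu, hzx]
    have inj : ∀ η1 ∈ B, ∀ η2 ∈ B,
        Function.update η1 x 0 = Function.update η2 x 0 → η1 = η2 := by
      intro η1 h1 η2 h2 he
      have hoff : ∀ z, z ≠ x → η1 z = η2 z := by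
        intro z hz
        have h3 := congrFun he z
        rwa [Function.update_of_ne hz, Function.update_of_ne hz] at h3
      funext z
      by_cases hz : z = x
      · subst hz
        have s1 := (hconfs_mem N η1 (hBc _ h1)).1
        have s2 := (hconfs_mem N η2 (hBc _ h2)).1
        have e1 : η1 z + ∑ w ∈ Finset.univ.erase z, η1 w = N := by
          rw [Finset.add_sum_erase _ _ (Finset.mem_univ z)]; exact s1
        have e2 : η2 z + ∑ w ∈ Finset.univ.erase z, η2 w = N := by
          rw [Finset.add_sum_erase _ _ (Finset.mem_univ z)]; exact s2
        have e3 : ∑ w ∈ Finset.univ.erase z, η1 w = ∑ w ∈ Finset.univ.erase z, η2 w :=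
          Finset.sum_congr rfl fun w hw => hoff w (Finset.mem_erase.1 hw).1
        omega
      · exact hoff z hz
    set P := Fintype.piFinset (fun z : S => if z = y then (Finset.range (N+1)).filter (t ≤ ·)
        else Finset.range (N+1)) with hP
    have himage : ∀ η ∈ B, Function.update η x 0 ∈ P := by
      intro η hη
      rw [hP, Fintype.mem_piFinset]
      intro z
      by_cases hzy : z = y
      · subst hzy
        rw [if_pos rfl, Finset.mem_filter, Finset.mem_range]
        have hzx : z ≠ x := fun h => hxy (h ▸ rfl)
        rw [Function.update_of_ne hzx]
        exact ⟨Nat.lt_succ_of_le ((hconfs_mem N η (hBc _ hη)).2 z), hBy _ hη⟩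
      · rw [if_neg hzy]
        by_cases hzx : z = x
        · subst hzx; simp
        · rw [Function.update_of_ne hzx, Finset.mem_range]
          exact Nat.lt_succ_of_le ((hconfs_mem N η (hBc _ hη)).2 z)
    calc ∑ η ∈ B, ∏ z ∈ Finset.univ.erase x, f z (η z)
        = ∑ η ∈ B, G (Function.update η x 0) := Finset.sum_congr rfl fun η _ => step1 η
      _ = ∑ η' ∈ B.image (fun η => Function.update η x 0), G η' :=
          (Finset.sum_image inj).symm
      _ ≤ ∑ η' ∈ P, G η' := by
          refine Finset.sum_le_sum_of_subset_of_nonneg ?_ (fun η' _ _ => hG_nonneg η')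
          intro η' hη'
          obtain ⟨η, hη, rfl⟩ := Finset.mem_image.1 hη'
          exact himage η hη
      _ = ∏ z, ∑ k ∈ (if z = y then (Finset.range (N+1)).filter (t ≤ ·)
            else Finset.range (N+1)), u z k := (Finset.prod_univ_sum _ _).symm
      _ ≤ T t * C1 ^ κ' := by
          rw [← Finset.mul_prod_erase Finset.univ _ (Finset.mem_univ y)]
          have hfac_nonneg : ∀ z : S, 0 ≤ ∑ k ∈ (if z = y then (Finset.range (N+1)).filter (t ≤ ·)
              else Finset.range (N+1)), u z k :=
            fun z => Finset.sum_nonneg fun k _ => hu_nonneg z k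
          have hy_factor : ∑ k ∈ (if y = y then (Finset.range (N+1)).filter (t ≤ ·)
              else Finset.range (N+1)), u y k ≤ T t := by
            rw [if_pos rfl]
            have hyu : ∀ k, u y k = f y k := by
              intro k; simp [hu, (show y ≠ x from fun h => hxy h.symm)]
            rw [Finset.sum_congr rfl fun k _ => hyu k]
            exact htail _ t y (fun k hk => (Finset.mem_filter.1 hk).2)
          have hrest : ∏ z ∈ Finset.univ.erase y, (∑ k ∈ (if z = y then
              (Finset.range (N+1)).filter (t ≤ ·) else Finset.range (N+1)), u z k) ≤ C1 ^ κ' := by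
            have hfac_le : ∀ z ∈ Finset.univ.erase y, (∑ k ∈ (if z = y then
                (Finset.range (N+1)).filter (t ≤ ·) else Finset.range (N+1)), u z k) ≤ C1 := by
              intro z hz
              rw [if_neg (Finset.mem_erase.1 hz).1]
              by_cases hzx : z = x
              · subst hzx
                have : ∑ k ∈ Finset.range (N+1), u z k = 1 := by
                  simp [hu]
                rw [this]; exact hC1_ge1
              · have : ∀ k, u z k = f z k := fun k => by simp [hu, hzx]
                rw [Finset.sum_congr rfl fun k _ => this k]
                exact hsum_le _ z
            calc ∏ z ∈ Finset.univ.erase y, (∑ k ∈ (if z = y then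
                (Finset.range (N+1)).filter (t ≤ ·) else Finset.range (N+1)), u z k)
                ≤ ∏ _z ∈ Finset.univ.erase y, C1 :=
                  Finset.prod_le_prod (fun z hz => hfac_nonneg z) hfac_le
              _ = C1 ^ (Finset.univ.erase y).card := Finset.prod_const C1
              _ ≤ C1 ^ κ' := pow_le_pow_right₀ hC1_ge1 (by
                  rw [Finset.card_erase_of_mem (Finset.mem_univ y), Finset.card_univ]; omega)
          exact mul_le_mul hy_factor hrest (Finset.prod_nonneg fun z _ => hfac_nonneg z)
            (hT_nonneg t)
  -- pointwise upper bounds on f at large occupation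
  have hgub : ∀ (N k : ℕ), 1 ≤ N → N ≤ κ' * k → g k ≤ (κ' : ℝ) ^ α / (N : ℝ) ^ α := by
    intro N k hN hk
    have hk0 : k ≠ 0 := by rintro rfl; omega
    have hNpos : (0:ℝ) < (N : ℝ) := by exact_mod_cast hN
    have hκposR : (0:ℝ) < (κ' : ℝ) := by exact_mod_cast hκpos
    rw [hgdef]; dsimp only
    rw [aZR, if_neg hk0]
    have hNk : (N : ℝ) / (κ' : ℝ) ≤ (k : ℝ) := by
      rw [div_le_iff₀ hκposR]
      calc (N : ℝ) ≤ ((κ' * k : ℕ) : ℝ) := by exact_mod_cast hk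
        _ = (k : ℝ) * (κ' : ℝ) := by push_cast; ring
    have hq_pos : (0:ℝ) < (N : ℝ) / (κ' : ℝ) := div_pos hNpos hκposR
    have h2 : ((N : ℝ) / (κ' : ℝ)) ^ α ≤ (k : ℝ) ^ α :=
      Real.rpow_le_rpow hq_pos.le hNk (by linarith)
    have h3 : (((N : ℝ) / (κ' : ℝ)) ^ α)⁻¹ = (κ' : ℝ) ^ α / (N : ℝ) ^ α := by
      rw [Real.div_rpow hNpos.le hκposR.le, inv_div]
    calc ((k : ℝ) ^ α)⁻¹ ≤ (((N : ℝ) / (κ' : ℝ)) ^ α)⁻¹ := by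
          apply inv_anti₀ (Real.rpow_pos_of_pos hq_pos α) h2
      _ = (κ' : ℝ) ^ α / (N : ℝ) ^ α := h3
  have hfub : ∀ (N k : ℕ) (x : S), 1 ≤ N → N ≤ κ' * k →
      f x k ≤ (κ' : ℝ) ^ α / (N : ℝ) ^ α :=
    fun N k x hN hk => (hfg x k).trans (hgub N k hN hk)
  have hfub2 : ∀ (N k : ℕ) (x : S), 1 ≤ N → N ≤ κ' * k →
      f x k ≤ mstar x ^ (N / κ') * ((κ' : ℝ) ^ α / (N : ℝ) ^ α) := by
    intro N k x hN hk
    have hdk : N / κ' ≤ k := by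
      calc N / κ' ≤ (κ' * k) / κ' := Nat.div_le_div_right hk
        _ = k := Nat.mul_div_cancel_left k hκpos
    have h1 : mstar x ^ k ≤ mstar x ^ (N / κ') :=
      pow_le_pow_of_le_one (hms_pos x).le (hms_le1 x) hdk
    have h2 : (aZR α k)⁻¹ ≤ (κ' : ℝ) ^ α / (N : ℝ) ^ α := hgub N k hN hk
    calc f x k = mstar x ^ k * (aZR α k)⁻¹ := div_eq_mul_inv _ _
      _ ≤ mstar x ^ (N / κ') * ((κ' : ℝ) ^ α / (N : ℝ) ^ α) :=
        mul_le_mul h1 h2 (inv_nonneg.2 (ha_pos k).le) (pow_nonneg (hms_pos x).le _)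
  -- the explicit vanishing bound
  set zbad := Finset.univ.filter (fun z : S => z ∉ Sstar) with hzbad
  set Bnd : ℕ → ℝ := fun N =>
    ∑ x : S, (if x ∈ Sstar then
      (κ' : ℝ) ^ α * C1 ^ κ' * ((κ' : ℝ) * T (ℓ N / κ' + 1) + ∑ z ∈ zbad, T (b z N + 1))
    else (κ' : ℝ) ^ α * C1 ^ (κ' + 1) * mstar x ^ (N / κ')) with hBnd
  have hdiv : Filter.Tendsto (fun n : ℕ => n / κ') Filter.atTop Filter.atTop := by
    apply Filter.tendsto_atTop_atTop.2
    intro bb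
    exact ⟨bb * κ', fun n hn => (Nat.le_div_iff_mul_le hκpos).2 hn⟩
  have hBnd0 : Filter.Tendsto Bnd Filter.atTop (nhds 0) := by
    rw [hBnd]
    have h0 : (0:ℝ) = ∑ _x : S, (0:ℝ) := by simp
    rw [h0]
    apply tendsto_finset_sum
    intro x _
    by_cases hx : x ∈ Sstar
    · simp only [if_pos hx]
      have h1 : Filter.Tendsto (fun N => T (ℓ N / κ' + 1)) Filter.atTop (nhds 0) := by
        apply hTtend.comp
        exact Filter.tendsto_atTop_mono (fun N => Nat.le_add_right _ 1) (hdiv.comp hℓ)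
      have h2 : Filter.Tendsto (fun N => ∑ z ∈ zbad, T (b z N + 1)) Filter.atTop (nhds 0) := by
        have h0' : (0:ℝ) = ∑ _z ∈ zbad, (0:ℝ) := by simp
        rw [h0']
        apply tendsto_finset_sum
        intro z hz
        have hzS : z ∉ Sstar := by
          rw [hzbad] at hz; exact (Finset.mem_filter.1 hz).2
        exact hTtend.comp (Filter.tendsto_atTop_mono (fun N => Nat.le_add_right _ 1) (hb z hzS))
      have h3 := ((h1.const_mul (κ' : ℝ)).add h2).const_mul ((κ' : ℝ) ^ α * C1 ^ κ')
      simpa using h3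
    · simp only [if_neg hx]
      have h1 : Filter.Tendsto (fun N : ℕ => mstar x ^ (N / κ')) Filter.atTop (nhds 0) :=
        (tendsto_pow_atTop_nhds_zero_of_lt_one (hms_pos x).le (hms_lt1 x hx)).comp hdiv
      have h2 := h1.const_mul ((κ' : ℝ) ^ α * C1 ^ (κ' + 1))
      simpa using h2
  -- main quantitative bound for N ≥ 1
  have hmain : ∀ N : ℕ, 1 ≤ N →
      0 ≤ ∑ η ∈ Δ N, μ N η ∧ ∑ η ∈ Δ N, μ N η ≤ Bnd N := by
    intro N hN
    have hNpos : (0:ℝ) < (N : ℝ) := by exact_mod_cast hN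
    have hNα_pos : (0:ℝ) < (N : ℝ) ^ α := Real.rpow_pos_of_pos hNpos α
    set TN := ∑ η ∈ confs S N, W η with hTNdef
    set η₀ : S → ℕ := fun z => if z = x₀ then N else 0 with hη₀
    have hη₀c : η₀ ∈ confs S N := by
      rw [confs, Finset.mem_filter]
      constructor
      · rw [Fintype.mem_piFinset]
        intro z
        rw [Finset.mem_range, hη₀]
        dsimp only
        split <;> omega
      · rw [hη₀]
        simp
    have hWη₀ : W η₀ = ((N : ℝ) ^ α)⁻¹ := by
      rw [hWdef]
      dsimp only
      rw [← Finset.mul_prod_erase Finset.univ _ (Finset.mem_univ x₀)]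
      have h1 : f x₀ (η₀ x₀) = ((N : ℝ) ^ α)⁻¹ := by
        rw [hη₀]; dsimp only; rw [if_pos rfl, hfdef]; dsimp only
        rw [hms_star x₀ hx₀star, one_pow, aZR, if_neg (by omega : ¬ N = 0), one_div]
      have h2 : ∏ z ∈ Finset.univ.erase x₀, f z (η₀ z) = 1 := by
        apply Finset.prod_eq_one
        intro z hz
        rw [hη₀]; dsimp only
        rw [if_neg (Finset.mem_erase.1 hz).1, hf0]
      rw [h1, h2, mul_one]
    have hTN_lb : ((N : ℝ) ^ α)⁻¹ ≤ TN :=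
      hWη₀ ▸ Finset.single_le_sum (fun η _ => hW_nonneg η) hη₀c
    have hTN_pos : (0:ℝ) < TN := lt_of_lt_of_le (by positivity) hTN_lb
    have hμW : ∀ η, μ N η = W η / TN := by
      intro η
      rw [hμ, hZ, hWeq η, ← hTNdef]
      field_simp
    have hμΔ : ∑ η ∈ Δ N, μ N η = (∑ η ∈ Δ N, W η) / TN := by
      rw [Finset.sum_div]
      exact Finset.sum_congr rfl fun η _ => hμW η
    have hΔW_nonneg : (0:ℝ) ≤ ∑ η ∈ Δ N, W η := Finset.sum_nonneg fun η _ => hW_nonneg η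
    have hΔconfs : ∀ η ∈ Δ N, η ∈ confs S N := by
      intro η hη; rw [hΔ] at hη; exact (Finset.mem_sdiff.1 hη).1
    set Dx : S → Finset (S → ℕ) := fun x => (Δ N).filter (fun η => N ≤ κ' * η x) with hDx
    have hDxconfs : ∀ x, ∀ η ∈ Dx x, η ∈ confs S N := by
      intro x η hη; exact hΔconfs η (Finset.mem_filter.1 hη).1
    have step1 : ∑ η ∈ Δ N, W η ≤ ∑ x : S, ∑ η ∈ Dx x, W η := by
      have h1 : ∀ η ∈ Δ N, W η ≤ ∑ x : S, (if N ≤ κ' * η x then W η else 0) := by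
        intro η hη
        obtain ⟨x, hx⟩ : ∃ x : S, N ≤ κ' * η x := by
          by_contra hc
          push_neg at hc
          have hsum := (hconfs_mem N η (hΔconfs η hη)).1
          have h2 : ∑ x : S, κ' * η x = κ' * N := by rw [← Finset.mul_sum, hsum]
          have h3 : ∑ x : S, κ' * η x ≤ ∑ _x : S, (N - 1) :=
            Finset.sum_le_sum fun x _ => by have := hc x; omega
          rw [Finset.sum_const, Finset.card_univ, smul_eq_mul, h2] at h3
          have h4 : N ≤ N - 1 := Nat.le_of_mul_le_mul_left h3 hκpos
          omega
        calc W η = (if N ≤ κ' * η x then W η else 0) := (if_pos hx).symm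
          _ ≤ ∑ x : S, (if N ≤ κ' * η x then W η else 0) :=
            Finset.single_le_sum (f := fun x => if N ≤ κ' * η x then W η else 0)
              (fun y _ => by split
                             · exact hW_nonneg η
                             · exact le_rfl)
              (Finset.mem_univ x)
      calc ∑ η ∈ Δ N, W η
          ≤ ∑ η ∈ Δ N, ∑ x : S, (if N ≤ κ' * η x then W η else 0) := Finset.sum_le_sum h1
        _ = ∑ x : S, ∑ η ∈ Δ N, (if N ≤ κ' * η x then W η else 0) := Finset.sum_comm
        _ = ∑ x : S, ∑ η ∈ Dx x, W η := by
            refine Finset.sum_congr rfl fun x _ => ?_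
            rw [hDx]
            exact (Finset.sum_filter _ _).symm
    have hcancel : ∀ X : ℝ, (N : ℝ) ^ α * ((κ' : ℝ) ^ α / (N : ℝ) ^ α * X) = (κ' : ℝ) ^ α * X := by
      intro X; field_simp
    have hDxW : ∀ (x y : S) (t : ℕ) (B : Finset (S → ℕ)), x ≠ y →
        (∀ η ∈ B, η ∈ confs S N) → (∀ η ∈ B, N ≤ κ' * η x) → (∀ η ∈ B, t ≤ η y) →
        ∑ η ∈ B, W η ≤ (κ' : ℝ) ^ α / (N : ℝ) ^ α * (T t * C1 ^ κ') := by
      intro x y t B hxy hBc hBx hBy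
      have h1 : ∀ η ∈ B, W η ≤
          (κ' : ℝ) ^ α / (N : ℝ) ^ α * ∏ z ∈ Finset.univ.erase x, f z (η z) := by
        intro η hη
        rw [hWdef]; dsimp only
        rw [← Finset.mul_prod_erase Finset.univ _ (Finset.mem_univ x)]
        exact mul_le_mul_of_nonneg_right (hfub N (η x) x hN (hBx η hη))
          (Finset.prod_nonneg fun z _ => (hf_pos _ _).le)
      calc ∑ η ∈ B, W η
          ≤ ∑ η ∈ B, (κ' : ℝ) ^ α / (N : ℝ) ^ α * ∏ z ∈ Finset.univ.erase x, f z (η z) :=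
            Finset.sum_le_sum h1
        _ = (κ' : ℝ) ^ α / (N : ℝ) ^ α * ∑ η ∈ B, ∏ z ∈ Finset.univ.erase x, f z (η z) :=
            (Finset.mul_sum _ _ _).symm
        _ ≤ (κ' : ℝ) ^ α / (N : ℝ) ^ α * (T t * C1 ^ κ') :=
            mul_le_mul_of_nonneg_left (core N t x y hxy B hBc hBy) (by positivity)
    have perx : ∀ x : S, (N : ℝ) ^ α * ∑ η ∈ Dx x, W η ≤
        (if x ∈ Sstar then
          (κ' : ℝ) ^ α * C1 ^ κ' * ((κ' : ℝ) * T (ℓ N / κ' + 1) + ∑ z ∈ zbad, T (b z N + 1))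
        else (κ' : ℝ) ^ α * C1 ^ (κ' + 1) * mstar x ^ (N / κ')) := by
      intro x
      by_cases hx : x ∈ Sstar
      · rw [if_pos hx]
        set t1 := ℓ N / κ' + 1 with ht1
        set Dx1 := (Dx x).filter (fun η => η x < N - ℓ N) with hDx1
        set Dx2 := (Dx x).filter (fun η => ∃ z, z ∉ Sstar ∧ b z N < η z) with hDx2
        have hsplit : Dx x ⊆ Dx1 ∪ Dx2 := by
          intro η hη
          have hηΔ : η ∈ Δ N := (Finset.mem_filter.1 hη).1
          have hηE : η ∉ E x N := by
            rw [hΔ] at hηΔ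
            have h5 := (Finset.mem_sdiff.1 hηΔ).2
            intro hc; exact h5 (Finset.mem_biUnion.2 ⟨x, hx, hc⟩)
          rw [hE, Finset.mem_filter] at hηE
          push_neg at hηE
          have h6 := hηE (hΔconfs η hηΔ)
          by_cases h7 : N - ℓ N ≤ η x
          · obtain ⟨z, hz1, hz2⟩ := h6 h7
            apply Finset.mem_union_right
            rw [hDx2]
            exact Finset.mem_filter.2 ⟨hη, ⟨z, hz1, by omega⟩⟩
          · apply Finset.mem_union_left
            rw [hDx1]
            exact Finset.mem_filter.2 ⟨hη, by omega⟩
        have hW1 : ∑ η ∈ Dx x, W η ≤ ∑ η ∈ Dx1, W η + ∑ η ∈ Dx2, W η := by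
          have h8 : ∑ η ∈ Dx x, W η ≤ ∑ η ∈ Dx1 ∪ Dx2, W η :=
            Finset.sum_le_sum_of_subset_of_nonneg hsplit (fun η _ _ => hW_nonneg η)
          have h9 := Finset.sum_union_inter (s₁ := Dx1) (s₂ := Dx2) (f := W)
          have h10 : (0:ℝ) ≤ ∑ η ∈ Dx1 ∩ Dx2, W η := Finset.sum_nonneg fun η _ => hW_nonneg η
          linarith
        have hTC_nonneg : ∀ t : ℕ, (0:ℝ) ≤ T t * C1 ^ κ' :=
          fun t => mul_nonneg (hT_nonneg t) (pow_nonneg hC1_pos.le _)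
        have hDx1b : ∑ η ∈ Dx1, W η ≤
            (κ' : ℝ) ^ α / (N : ℝ) ^ α * ((κ' : ℝ) * (T t1 * C1 ^ κ')) := by
          have hpig : ∀ η ∈ Dx1, ∃ y : S, y ≠ x ∧ t1 ≤ η y := by
            intro η hη
            have hηx : η x < N - ℓ N := (Finset.mem_filter.1 hη).2
            have hηDx : η ∈ Dx x := (Finset.mem_filter.1 hη).1
            have hc : η ∈ confs S N := hDxconfs x η hηDx
            have hsum := (hconfs_mem N η hc).1
            by_contra hcon
            push_neg at hcon
            have h2 : η x + ∑ w ∈ Finset.univ.erase x, η w = N := by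
              rw [Finset.add_sum_erase _ _ (Finset.mem_univ x)]; exact hsum
            have h3 : ∑ w ∈ Finset.univ.erase x, η w ≤ (Finset.univ.erase x).card * (ℓ N / κ') := by
              have h3' := Finset.sum_le_card_nsmul (Finset.univ.erase x) η (ℓ N / κ')
                (fun w hw => by have := hcon w (Finset.mem_erase.1 hw).1; omega)
              simpa using h3'
            have hcard : (Finset.univ.erase x).card = κ' - 1 := by
              rw [Finset.card_erase_of_mem (Finset.mem_univ x), Finset.card_univ]
            have h4 : (κ' - 1) * (ℓ N / κ') ≤ ℓ N := by
              calc (κ' - 1) * (ℓ N / κ') ≤ κ' * (ℓ N / κ') :=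
                    Nat.mul_le_mul_right _ (by omega)
                _ ≤ ℓ N := by rw [mul_comm]; exact Nat.div_mul_le_self _ _
            rw [hcard] at h3
            omega
          have h1 : ∀ η ∈ Dx1, W η ≤ ∑ y ∈ Finset.univ.erase x, (if t1 ≤ η y then W η else 0) := by
            intro η hη
            obtain ⟨y, hyx, hyt⟩ := hpig η hη
            calc W η = (if t1 ≤ η y then W η else 0) := (if_pos hyt).symm
              _ ≤ ∑ y ∈ Finset.univ.erase x, (if t1 ≤ η y then W η else 0) :=
                  Finset.single_le_sum (f := fun y => if t1 ≤ η y then W η else 0)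
                    (fun w _ => by split
                                   · exact hW_nonneg η
                                   · exact le_rfl)
                    (Finset.mem_erase.2 ⟨hyx, Finset.mem_univ y⟩)
          calc ∑ η ∈ Dx1, W η
              ≤ ∑ η ∈ Dx1, ∑ y ∈ Finset.univ.erase x, (if t1 ≤ η y then W η else 0) :=
                Finset.sum_le_sum h1
            _ = ∑ y ∈ Finset.univ.erase x, ∑ η ∈ Dx1, (if t1 ≤ η y then W η else 0) :=
                Finset.sum_comm
            _ = ∑ y ∈ Finset.univ.erase x, ∑ η ∈ Dx1.filter (fun η => t1 ≤ η y), W η := by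
                refine Finset.sum_congr rfl fun y _ => ?_
                exact (Finset.sum_filter _ _).symm
            _ ≤ ∑ y ∈ Finset.univ.erase x, (κ' : ℝ) ^ α / (N : ℝ) ^ α * (T t1 * C1 ^ κ') := by
                refine Finset.sum_le_sum fun y hy => ?_
                have hxy : x ≠ y := fun h => (Finset.mem_erase.1 hy).1 h.symm
                refine hDxW x y t1 _ hxy ?_ ?_ ?_
                · intro η hη
                  exact hDxconfs x η (Finset.mem_filter.1 (Finset.mem_filter.1 hη).1).1
                · intro η hη
                  exact (Finset.mem_filter.1 (Finset.mem_filter.1 (Finset.mem_filter.1 hη).1).1).2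
                · intro η hη; exact (Finset.mem_filter.1 hη).2
            _ ≤ (κ' : ℝ) ^ α / (N : ℝ) ^ α * ((κ' : ℝ) * (T t1 * C1 ^ κ')) := by
                rw [Finset.sum_const, nsmul_eq_mul]
                have hc1 : ((Finset.univ.erase x).card : ℝ) ≤ (κ' : ℝ) := by
                  rw [Finset.card_erase_of_mem (Finset.mem_univ x), Finset.card_univ]
                  exact_mod_cast Nat.sub_le κ' 1
                calc ((Finset.univ.erase x).card : ℝ) *
                      ((κ' : ℝ) ^ α / (N : ℝ) ^ α * (T t1 * C1 ^ κ'))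
                    ≤ (κ' : ℝ) * ((κ' : ℝ) ^ α / (N : ℝ) ^ α * (T t1 * C1 ^ κ')) :=
                      mul_le_mul_of_nonneg_right hc1
                        (mul_nonneg (by positivity) (hTC_nonneg t1))
                  _ = (κ' : ℝ) ^ α / (N : ℝ) ^ α * ((κ' : ℝ) * (T t1 * C1 ^ κ')) := by ring
        have hDx2b : ∑ η ∈ Dx2, W η ≤
            (κ' : ℝ) ^ α / (N : ℝ) ^ α * (∑ z ∈ zbad, T (b z N + 1) * C1 ^ κ') := by
          have h1 : ∀ η ∈ Dx2, W η ≤ ∑ z ∈ zbad, (if b z N + 1 ≤ η z then W η else 0) := by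
            intro η hη
            obtain ⟨z, hz1, hz2⟩ := (Finset.mem_filter.1 hη).2
            calc W η = (if b z N + 1 ≤ η z then W η else 0) := (if_pos (by omega)).symm
              _ ≤ ∑ z ∈ zbad, (if b z N + 1 ≤ η z then W η else 0) :=
                  Finset.single_le_sum (f := fun z => if b z N + 1 ≤ η z then W η else 0)
                    (fun w _ => by split
                                   · exact hW_nonneg η
                                   · exact le_rfl)
                    (by rw [hzbad]; exact Finset.mem_filter.2 ⟨Finset.mem_univ z, hz1⟩)
          calc ∑ η ∈ Dx2, W η
              ≤ ∑ η ∈ Dx2, ∑ z ∈ zbad, (if b z N + 1 ≤ η z then W η else 0) :=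
                Finset.sum_le_sum h1
            _ = ∑ z ∈ zbad, ∑ η ∈ Dx2, (if b z N + 1 ≤ η z then W η else 0) := Finset.sum_comm
            _ = ∑ z ∈ zbad, ∑ η ∈ Dx2.filter (fun η => b z N + 1 ≤ η z), W η := by
                refine Finset.sum_congr rfl fun z _ => (Finset.sum_filter _ _).symm
            _ ≤ ∑ z ∈ zbad, (κ' : ℝ) ^ α / (N : ℝ) ^ α * (T (b z N + 1) * C1 ^ κ') := by
                refine Finset.sum_le_sum fun z hz => ?_
                have hzS : z ∉ Sstar := by rw [hzbad] at hz; exact (Finset.mem_filter.1 hz).2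
                have hxz : x ≠ z := fun h => hzS (h ▸ hx)
                refine hDxW x z (b z N + 1) _ hxz ?_ ?_ ?_
                · intro η hη
                  exact hDxconfs x η (Finset.mem_filter.1 (Finset.mem_filter.1 hη).1).1
                · intro η hη
                  exact (Finset.mem_filter.1 (Finset.mem_filter.1 (Finset.mem_filter.1 hη).1).1).2
                · intro η hη; exact (Finset.mem_filter.1 hη).2
            _ = (κ' : ℝ) ^ α / (N : ℝ) ^ α * (∑ z ∈ zbad, T (b z N + 1) * C1 ^ κ') := by
                rw [Finset.mul_sum]
        calc (N : ℝ) ^ α * ∑ η ∈ Dx x, W η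
            ≤ (N : ℝ) ^ α * ((κ' : ℝ) ^ α / (N : ℝ) ^ α *
              ((κ' : ℝ) * (T t1 * C1 ^ κ') + ∑ z ∈ zbad, T (b z N + 1) * C1 ^ κ')) := by
              apply mul_le_mul_of_nonneg_left _ hNα_pos.le
              calc ∑ η ∈ Dx x, W η ≤ ∑ η ∈ Dx1, W η + ∑ η ∈ Dx2, W η := hW1
                _ ≤ (κ' : ℝ) ^ α / (N : ℝ) ^ α * ((κ' : ℝ) * (T t1 * C1 ^ κ')) +
                    (κ' : ℝ) ^ α / (N : ℝ) ^ α * (∑ z ∈ zbad, T (b z N + 1) * C1 ^ κ') :=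
                  add_le_add hDx1b hDx2b
                _ = (κ' : ℝ) ^ α / (N : ℝ) ^ α *
                    ((κ' : ℝ) * (T t1 * C1 ^ κ') + ∑ z ∈ zbad, T (b z N + 1) * C1 ^ κ') := by
                  ring
          _ = (κ' : ℝ) ^ α *
              ((κ' : ℝ) * (T t1 * C1 ^ κ') + ∑ z ∈ zbad, T (b z N + 1) * C1 ^ κ') := hcancel _
          _ = (κ' : ℝ) ^ α * C1 ^ κ' * ((κ' : ℝ) * T t1 + ∑ z ∈ zbad, T (b z N + 1)) := by
              rw [← Finset.sum_mul]
              ring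
      · rw [if_neg hx]
        obtain ⟨y, hyx⟩ := Fintype.exists_ne_of_one_lt_card (by omega) x
        have h1 : ∀ η ∈ Dx x, W η ≤ mstar x ^ (N / κ') * ((κ' : ℝ) ^ α / (N : ℝ) ^ α) *
            ∏ z ∈ Finset.univ.erase x, f z (η z) := by
          intro η hη
          rw [hWdef]; dsimp only
          rw [← Finset.mul_prod_erase Finset.univ _ (Finset.mem_univ x)]
          exact mul_le_mul_of_nonneg_right
            (hfub2 N (η x) x hN (Finset.mem_filter.1 hη).2)
            (Finset.prod_nonneg fun z _ => (hf_pos _ _).le)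
        have h2 : ∑ η ∈ Dx x, W η ≤
            mstar x ^ (N / κ') * ((κ' : ℝ) ^ α / (N : ℝ) ^ α) * (T 0 * C1 ^ κ') := by
          calc ∑ η ∈ Dx x, W η
              ≤ ∑ η ∈ Dx x, mstar x ^ (N / κ') * ((κ' : ℝ) ^ α / (N : ℝ) ^ α) *
                ∏ z ∈ Finset.univ.erase x, f z (η z) := Finset.sum_le_sum h1
            _ = mstar x ^ (N / κ') * ((κ' : ℝ) ^ α / (N : ℝ) ^ α) *
                ∑ η ∈ Dx x, ∏ z ∈ Finset.univ.erase x, f z (η z) := (Finset.mul_sum _ _ _).symm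
            _ ≤ _ := by
                apply mul_le_mul_of_nonneg_left
                  (core N 0 x y (Ne.symm hyx) (Dx x) (hDxconfs x) (fun η _ => Nat.zero_le _))
                  (mul_nonneg (pow_nonneg (hms_pos x).le _) (by positivity))
        calc (N : ℝ) ^ α * ∑ η ∈ Dx x, W η
            ≤ (N : ℝ) ^ α * (mstar x ^ (N / κ') * ((κ' : ℝ) ^ α / (N : ℝ) ^ α) *
              (T 0 * C1 ^ κ')) := mul_le_mul_of_nonneg_left h2 hNα_pos.le
          _ = (κ' : ℝ) ^ α * C1 ^ (κ' + 1) * mstar x ^ (N / κ') := by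
              rw [hT0C1, pow_succ]
              field_simp
    constructor
    · rw [hμΔ]; exact div_nonneg hΔW_nonneg hTN_pos.le
    · rw [hμΔ]
      have hkey : (∑ η ∈ Δ N, W η) / TN ≤ (N : ℝ) ^ α * ∑ η ∈ Δ N, W η := by
        rw [div_eq_mul_inv, mul_comm ((N : ℝ) ^ α) _]
        apply mul_le_mul_of_nonneg_left _ hΔW_nonneg
        calc TN⁻¹ ≤ (((N : ℝ) ^ α)⁻¹)⁻¹ := inv_anti₀ (by positivity) hTN_lb
          _ = (N : ℝ) ^ α := inv_inv _
      have hkey2 : (N : ℝ) ^ α * ∑ η ∈ Δ N, W η ≤ Bnd N := by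
        calc (N : ℝ) ^ α * ∑ η ∈ Δ N, W η
            ≤ (N : ℝ) ^ α * ∑ x : S, ∑ η ∈ Dx x, W η :=
              mul_le_mul_of_nonneg_left step1 hNα_pos.le
          _ = ∑ x : S, (N : ℝ) ^ α * ∑ η ∈ Dx x, W η := Finset.mul_sum _ _ _
          _ ≤ Bnd N := by
              rw [hBnd]
              exact Finset.sum_le_sum fun x _ => perx x
      linarith
  apply tendsto_of_tendsto_of_tendsto_of_le_of_le' tendsto_const_nhds hBnd0
  · filter_upwards [Filter.eventually_ge_atTop 1] with N hN
    exact (hmain N hN).1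
  · filter_upwards [Filter.eventually_ge_atTop 1] with N hN
    exact (hmain N hN).2
end
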